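/- arXiv:2509.10268 — 6 statements merged into one kernel-verified Lean document; each statement's English description precedes it below -/
import Mathlib

section
/- For every ε ∈ (0,1) there exist an integer K ≥ 2, a probability space carrying a real-valued random variable X and a categorical random variable Y with values in {1,…,K} and P(Y=k) > 0 for all k, and bijections ℓ₁, ℓ₂ of {1,…,K}, such that ξ(X, ℓ₁∘Y) − ξ(X, ℓ₂∘Y) > 1 − ε; in particular max_{ℓ∈ℒ_Y} ξ(X, ℓ(Y)) − min_{ℓ∈ℒ_Y} ξ(X, ℓ(Y)) > 1 − ε. -/
open MeasureTheory ProbabilityTheory Filter Set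

noncomputable section

/-- Variance of a real-valued random variable. -/
def var {Ω : Type*} [MeasurableSpace Ω] (P : Measure Ω) (f : Ω → ℝ) : ℝ :=
  ∫ ω, (f ω) ^ 2 ∂P - (∫ ω, f ω ∂P) ^ 2

/-- Chatterjee's coefficient
`ξ(X,W) = ∫ Var(P(W ≥ t ∣ X)) dF(t) / ∫ Var(1{W ≥ t}) dF(t)`,
where the integrals are taken with respect to the distribution of `W`. -/
def xi {Ω : Type*} [MeasurableSpace Ω] (P : Measure Ω) (X : Ω → ℝ) (W : Ω → ℝ) : ℝ :=
  (∫ t, var P (P[(fun ω => if t ≤ W ω then (1 : ℝ) else 0) |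
      MeasurableSpace.comap X inferInstance]) ∂(Measure.map W P)) /
    (∫ t, var P (fun ω => if t ≤ W ω then (1 : ℝ) else 0) ∂(Measure.map W P))

set_option linter.unusedSectionVars false

open scoped ENNReal

namespace P1

/-! ### The probability space: uniform measure on `Fin n × Fin n` -/

variable {n : ℕ} [NeZero n]

abbrev Om (n : ℕ) := Fin n × Fin n

def Pn (n : ℕ) [NeZero n] : Measure (Om n) := (PMF.uniformOfFintype (Om n)).toMeasure

instance : IsProbabilityMeasure (Pn n) := PMF.toMeasure.isProbabilityMeasure _

lemma hn0 : 0 < n := Nat.pos_of_ne_zero (NeZero.ne n)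

lemma npos : (0:ℝ) < (n:ℝ) := by
  exact_mod_cast Nat.pos_of_ne_zero (NeZero.ne n)

lemma Pn_singleton (ω : Om n) : Pn n {ω} = ((n:ℝ≥0∞) * n)⁻¹ := by
  rw [Pn, PMF.toMeasure_apply_singleton _ _ (measurableSet_singleton ω),
    PMF.uniformOfFintype_apply]
  simp [Fintype.card_prod]

lemma integral_Pn (f : Om n → ℝ) : ∫ ω, f ω ∂(Pn n) = (∑ ω, f ω) / (n * n) := by
  rw [integral_fintype (Integrable.of_finite), Finset.sum_div]
  refine Finset.sum_congr rfl fun ω _ => ?_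
  rw [Measure.real, Pn_singleton, ENNReal.toReal_inv, smul_eq_mul, div_eq_inv_mul]
  norm_num

/-! ### The conditioning variable and the conditional expectation -/

def Xn (n : ℕ) : Om n → ℝ := fun ω => ((ω.1 : ℕ) : ℝ)

lemma measurable_Xn : Measurable (Xn n) := measurable_of_countable _

def mX (n : ℕ) : MeasurableSpace (Om n) :=
  MeasurableSpace.comap (Xn n) inferInstance

lemma hmX : mX n ≤ (inferInstance : MeasurableSpace (Om n)) :=
  (measurable_Xn (n := n)).comap_le

lemma fst_preimage_measurable (v : Set (Fin n)) :
    MeasurableSet[mX n] (Prod.fst ⁻¹' v) := by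
  rw [mX, MeasurableSpace.measurableSet_comap]
  refine ⟨(fun j : Fin n => ((j:ℕ):ℝ)) '' v, (v.toFinite.image _).measurableSet, ?_⟩
  ext ω
  simp only [Set.mem_preimage, Set.mem_image, Xn]
  constructor
  · rintro ⟨j, hj, hje⟩
    have : j = ω.1 := Fin.val_injective (Nat.cast_injective (R := ℝ) hje)
    rwa [this] at hj
  · intro h
    exact ⟨ω.1, h, rfl⟩

/-- The conditional expectation given `Xn` is averaging over the second coordinate. -/
lemma condexp_Pn (f : Om n → ℝ) :
    (Pn n)[f | mX n] =ᵐ[Pn n] fun ω => (∑ r : Fin n, f (ω.1, r)) / n := by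
  have hmn : mX n ≤ (inferInstance : MeasurableSpace (Om n)) := hmX
  haveI : SigmaFinite ((Pn n).trim hmn) := by
    haveI : IsFiniteMeasure ((Pn n).trim hmn) := isFiniteMeasure_trim hmn
    infer_instance
  refine (ae_eq_condExp_of_forall_setIntegral_eq hmn (Integrable.of_finite)
    (fun s _ _ => Integrable.integrableOn Integrable.of_finite) ?_ ?_).symm
  · intro s hs _
    obtain ⟨B, hB, rfl⟩ := (MeasurableSpace.measurableSet_comap).mp hs
    have hXB : Xn n ⁻¹' B = Prod.fst ⁻¹' ((fun j : Fin n => ((j:ℕ):ℝ)) ⁻¹' B) := rfl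
    rw [hXB]
    set u : Set (Fin n) := (fun j : Fin n => ((j:ℕ):ℝ)) ⁻¹' B with hu
    have hmeas : MeasurableSet (Prod.fst ⁻¹' u : Set (Om n)) :=
      MeasurableSet.of_discrete
    rw [← integral_indicator hmeas, ← integral_indicator hmeas, integral_Pn, integral_Pn]
    congr 1
    rw [Fintype.sum_prod_type, Fintype.sum_prod_type]
    refine Finset.sum_congr rfl fun j _ => ?_
    by_cases hj : j ∈ u
    · have h1 : ∀ r : Fin n, ((j, r) : Om n) ∈ Prod.fst ⁻¹' u := fun r => hj
      simp only [Set.indicator_of_mem (h1 _)]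
      rw [Finset.sum_const, Finset.card_univ, Fintype.card_fin, nsmul_eq_mul,
        mul_div_cancel₀ _ (npos (n := n)).ne']
    · have h1 : ∀ r : Fin n, ((j, r) : Om n) ∉ Prod.fst ⁻¹' u := fun r => hj
      simp [Set.indicator_of_notMem (h1 _)]
  · refine StronglyMeasurable.aestronglyMeasurable (Measurable.stronglyMeasurable ?_)
    intro t _
    have : (fun ω : Om n => (∑ r : Fin n, f (ω.1, r)) / n) ⁻¹' t
        = Prod.fst ⁻¹' ((fun j : Fin n => (∑ r : Fin n, f (j, r)) / n) ⁻¹' t) := rfl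
    rw [this]
    exact fst_preimage_measurable _

/-! ### Explicit formulas for the two integrands appearing in `xi` -/

def gW (W : Om n → ℝ) (t : ℝ) : Om n → ℝ :=
  fun ω => (∑ r : Fin n, if t ≤ W (ω.1, r) then (1:ℝ) else 0) / n

def Fnum (W : Om n → ℝ) : ℝ → ℝ :=
  fun t => (∑ ω, (gW W t ω)^2)/(n*n) - ((∑ ω, gW W t ω)/(n*n))^2

def Fden (W : Om n → ℝ) : ℝ → ℝ :=
  fun t => (∑ ω : Om n, if t ≤ W ω then (1:ℝ) else 0)/(n*n)
    - ((∑ ω : Om n, if t ≤ W ω then (1:ℝ) else 0)/(n*n))^2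

lemma meas_ind (w : ℝ) : Measurable (fun t : ℝ => if t ≤ w then (1:ℝ) else 0) :=
  Measurable.ite measurableSet_Iic measurable_const measurable_const

lemma meas_sum_ind (g : Om n → ℝ) :
    Measurable (fun t : ℝ => ∑ ω : Om n, if t ≤ g ω then (1:ℝ) else 0) :=
  Finset.measurable_sum _ (fun ω _ => meas_ind (g ω))

lemma meas_gW_sum (W : Om n → ℝ) :
    Measurable (fun t : ℝ => ∑ ω : Om n, gW W t ω) := by
  refine Finset.measurable_sum _ (fun ω _ => ?_)
  exact (Finset.measurable_sum _ (fun r _ => meas_ind (W (ω.1, r)))).div_const _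

lemma meas_gW_sq_sum (W : Om n → ℝ) :
    Measurable (fun t : ℝ => ∑ ω : Om n, (gW W t ω)^2) := by
  refine Finset.measurable_sum _ (fun ω _ => ?_)
  exact ((Finset.measurable_sum _ (fun r _ => meas_ind (W (ω.1, r)))).div_const _).pow_const 2

lemma meas_Fnum (W : Om n → ℝ) : Measurable (Fnum W) :=
  ((meas_gW_sq_sum W).div_const _).sub (((meas_gW_sum W).div_const _).pow_const 2)

lemma meas_Fden (W : Om n → ℝ) : Measurable (Fden W) :=
  ((meas_sum_ind W).div_const _).sub ((((meas_sum_ind W)).div_const _).pow_const 2)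

lemma num_integrand (W : Om n → ℝ) (t : ℝ) :
    var (Pn n) ((Pn n)[(fun ω => if t ≤ W ω then (1:ℝ) else 0) | mX n]) = Fnum W t := by
  have h := condexp_Pn (n := n) (fun ω => if t ≤ W ω then (1:ℝ) else 0)
  have h2 : (fun ω => ((Pn n)[(fun ω => if t ≤ W ω then (1:ℝ) else 0) | mX n]) ω ^ 2)
      =ᵐ[Pn n] fun ω => (gW W t ω)^2 := h.mono fun ω hω => by
    show _ ^ 2 = _ ^ 2
    rw [hω]; rfl
  rw [var, integral_congr_ae h2, integral_congr_ae h, Fnum, integral_Pn, integral_Pn]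
  rfl

lemma den_integrand (W : Om n → ℝ) (t : ℝ) :
    var (Pn n) (fun ω => if t ≤ W ω then (1:ℝ) else 0) = Fden W t := by
  have hsq : (fun ω : Om n => (if t ≤ W ω then (1:ℝ) else 0) ^ 2)
      = fun ω => if t ≤ W ω then (1:ℝ) else 0 := by
    funext ω; split <;> norm_num
  rw [var, hsq, integral_Pn]
  rfl

lemma num_eq (W : Om n → ℝ) (hW : Measurable W) :
    (∫ t, var (Pn n) ((Pn n)[(fun ω => if t ≤ W ω then (1:ℝ) else 0) | mX n])
      ∂(Measure.map W (Pn n))) = (∑ ω, Fnum W (W ω)) / (n*n) := by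
  have : (fun t => var (Pn n) ((Pn n)[(fun ω => if t ≤ W ω then (1:ℝ) else 0) | mX n]))
      = Fnum W := funext fun t => num_integrand W t
  rw [this, integral_map hW.aemeasurable (meas_Fnum W).aestronglyMeasurable, integral_Pn]

lemma den_eq (W : Om n → ℝ) (hW : Measurable W) :
    (∫ t, var (Pn n) (fun ω => if t ≤ W ω then (1:ℝ) else 0) ∂(Measure.map W (Pn n)))
      = (∑ ω, Fden W (W ω)) / (n*n) := by
  have : (fun t => var (Pn n) (fun ω => if t ≤ W ω then (1:ℝ) else 0)) = Fden W :=
    funext fun t => den_integrand W t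
  rw [this, integral_map hW.aemeasurable (meas_Fden W).aestronglyMeasurable, integral_Pn]

lemma xi_eq (W : Om n → ℝ) (hW : Measurable W) :
    xi (Pn n) (Xn n) W = (∑ ω, Fnum W (W ω)) / (∑ ω, Fden W (W ω)) := by
  rw [xi]
  rw [show (MeasurableSpace.comap (Xn n) inferInstance) = mX n from rfl]
  rw [num_eq W hW, den_eq W hW, div_div_div_comm,
    div_self (mul_pos (npos (n:=n)) (npos (n:=n))).ne', div_one]

/-! ### The two labelled random variables and counting lemmas -/

def W1 (n : ℕ) : Om n → ℝ := fun ω => ((n * ω.1.val + ω.2.val + 1 : ℕ) : ℝ)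
def W2 (n : ℕ) : Om n → ℝ := fun ω => ((n * ω.2.val + ω.1.val + 1 : ℕ) : ℝ)

lemma cast_le_iff (x y : ℕ) : ((x+1:ℕ):ℝ) ≤ ((y+1:ℕ):ℝ) ↔ x ≤ y := by
  rw [Nat.cast_le]; omega

lemma mul_lt_case {a j c : ℕ} (h : a < j) (hc : c < n) (r : ℕ) :
    n*a + c ≤ n*j + r := by
  have h1 : n*(a+1) ≤ n*j := Nat.mul_le_mul_left n h
  have h2 : n*a + c < n*(a+1) := by rw [Nat.mul_succ]; omega
  omega

lemma mul_gt_case {a j r : ℕ} (h : j < a) (hr : r < n) (c : ℕ) :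
    ¬ (n*a + c ≤ n*j + r) := by
  have h1 : n*(j+1) ≤ n*a := Nat.mul_le_mul_left n h
  have h2 : n*j + r < n*(j+1) := by rw [Nat.mul_succ]; omega
  omega

lemma count_ge (a : Fin n) : (∑ j : Fin n, if a.val ≤ j.val then (1:ℝ) else 0)
    = (n:ℝ) - a.val := by
  rw [Fin.sum_univ_eq_sum_range (fun j => if a.val ≤ j then (1:ℝ) else 0)]
  rw [Finset.sum_boole]
  have : (Finset.range n).filter (fun j => a.val ≤ j) = Finset.Ico a.val n := by
    ext x; simp [Finset.mem_range, Finset.mem_Ico, and_comm]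
  rw [this, Nat.card_Ico, Nat.cast_sub a.isLt.le]

lemma count_gt (a : Fin n) : (∑ j : Fin n, if a.val < j.val then (1:ℝ) else 0)
    = (n:ℝ) - 1 - a.val := by
  rw [Fin.sum_univ_eq_sum_range (fun j => if a.val < j then (1:ℝ) else 0)]
  rw [Finset.sum_boole]
  have : (Finset.range n).filter (fun j => a.val < j) = Finset.Ico (a.val+1) n := by
    ext x; simp only [Finset.mem_filter, Finset.mem_range, Finset.mem_Ico]; omega
  rw [this, Nat.card_Ico]
  have := a.isLt
  push_cast [Nat.cast_sub (by omega : a.val + 1 ≤ n)]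
  ring

lemma sum_three (a : Fin n) (x y : ℝ) :
    (∑ j : Fin n, if a.val < j.val then x else if j = a then y else 0)
      = ((n:ℝ) - 1 - a.val) * x + y := by
  have hw : ∀ j : Fin n, (if a.val < j.val then x else if j = a then y else 0)
      = x * (if a.val < j.val then (1:ℝ) else 0) + (if j = a then y else 0) := by
    intro j
    by_cases h1 : a.val < j.val
    · have : ¬ (j = a) := fun he => by simp [he] at h1
      simp [h1, this]
    · simp [h1]
  simp only [hw]
  rw [Finset.sum_add_distrib, ← Finset.mul_sum, count_gt,
    Finset.sum_ite_eq' Finset.univ a (fun _ => y)]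
  simp [mul_comm]

lemma sum_two (a : Fin n) (x y : ℝ) :
    (∑ j : Fin n, if a.val ≤ j.val then x else y)
      = ((n:ℝ) - a.val) * x + (a.val : ℝ) * y := by
  have hw : ∀ j : Fin n, (if a.val ≤ j.val then x else y)
      = (x - y) * (if a.val ≤ j.val then (1:ℝ) else 0) + y := by
    intro j; by_cases h1 : a.val ≤ j.val <;> simp [h1]
  simp only [hw]
  rw [Finset.sum_add_distrib, ← Finset.mul_sum, count_ge, Finset.sum_const]
  simp only [Finset.card_univ, Fintype.card_fin, nsmul_eq_mul]
  ring

lemma sum_ite_W1 (a c j : Fin n) :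
    (∑ r : Fin n, if W1 n (a,c) ≤ W1 n (j,r) then (1:ℝ) else 0)
      = if a.val < j.val then (n:ℝ) else if j = a then (n:ℝ) - c.val else 0 := by
  have hcond : ∀ r : Fin n, (W1 n (a,c) ≤ W1 n (j,r)) ↔ n*a.val + c.val ≤ n*j.val + r.val := by
    intro r; exact cast_le_iff _ _
  rcases lt_trichotomy a.val j.val with h | h | h
  · have : ∀ r : Fin n, (if W1 n (a,c) ≤ W1 n (j,r) then (1:ℝ) else 0) = 1 := by
      intro r
      rw [if_pos ((hcond r).mpr (mul_lt_case h c.isLt r.val))]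
    simp only [this, Finset.sum_const, Finset.card_univ, Fintype.card_fin, nsmul_eq_mul, mul_one]
    rw [if_pos h]
  · have hja : j = a := Fin.ext h.symm
    have : ∀ r : Fin n, (if W1 n (a,c) ≤ W1 n (j,r) then (1:ℝ) else 0)
        = if c.val ≤ r.val then (1:ℝ) else 0 := by
      intro r
      have : (W1 n (a,c) ≤ W1 n (j,r)) ↔ c.val ≤ r.val := by
        rw [hcond r, h]; omega
      simp [this]
    simp only [this]
    rw [count_ge c, if_neg (by omega : ¬ a.val < j.val), if_pos hja]
  · have : ∀ r : Fin n, (if W1 n (a,c) ≤ W1 n (j,r) then (1:ℝ) else 0) = 0 := by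
      intro r
      rw [if_neg (fun hc => mul_gt_case h r.isLt c.val ((hcond r).mp hc))]
    have hne : ¬ (j = a) := fun he => by rw [he] at h; omega
    simp only [this, Finset.sum_const, smul_zero]
    rw [if_neg (by omega : ¬ a.val < j.val), if_neg hne]

lemma sum_ite_W2 (a c j : Fin n) :
    (∑ r : Fin n, if W2 n (a,c) ≤ W2 n (j,r) then (1:ℝ) else 0)
      = ((n:ℝ) - 1 - c.val) + (if a.val ≤ j.val then (1:ℝ) else 0) := by
  have hcond : ∀ r : Fin n, (W2 n (a,c) ≤ W2 n (j,r)) ↔ n*c.val + a.val ≤ n*r.val + j.val := by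
    intro r; exact cast_le_iff _ _
  have hw : ∀ r : Fin n, (if W2 n (a,c) ≤ W2 n (j,r) then (1:ℝ) else 0)
      = (if c.val < r.val then (1:ℝ) else 0)
        + (if r = c then (if a.val ≤ j.val then (1:ℝ) else 0) else 0) := by
    intro r
    rcases lt_trichotomy c.val r.val with h | h | h
    · have hne : ¬ (r = c) := fun he => by simp [he] at h
      rw [if_pos ((hcond r).mpr (mul_lt_case h a.isLt j.val)), if_pos h, if_neg hne]
      ring
    · have hrc : r = c := Fin.ext h.symm
      have : (W2 n (a,c) ≤ W2 n (j,r)) ↔ a.val ≤ j.val := by rw [hcond r, h]; omega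
      simp only [this, if_neg (by omega : ¬ c.val < r.val), if_pos hrc]
      ring
    · have hne : ¬ (r = c) := fun he => by simp [he] at h
      rw [if_neg (fun hc => mul_gt_case h j.isLt a.val ((hcond r).mp hc)),
        if_neg (by omega : ¬ c.val < r.val), if_neg hne]
      ring
  simp only [hw]
  rw [Finset.sum_add_distrib, count_gt,
    Finset.sum_ite_eq' Finset.univ c (fun _ => if a.val ≤ j.val then (1:ℝ) else 0)]
  simp

/-! ### Evaluation of the integrands at the atoms -/

def A1 (n : ℕ) (a c : Fin n) : ℝ := n*((n:ℝ)-1-a.val) + ((n:ℝ)-c.val)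
def A2 (n : ℕ) (a c : Fin n) : ℝ := (n:ℝ)^2*((n:ℝ)-1-a.val) + ((n:ℝ)-c.val)^2
def B1 (n : ℕ) (a c : Fin n) : ℝ := n*((n:ℝ)-1-c.val) + ((n:ℝ)-a.val)
def B2 (n : ℕ) (a c : Fin n) : ℝ :=
  ((n:ℝ)-a.val)*((n:ℝ)-c.val)^2 + (a.val:ℝ)*((n:ℝ)-1-c.val)^2

lemma sumj_W1 (a c : Fin n) :
    (∑ j : Fin n, ∑ r : Fin n, if W1 n (a,c) ≤ W1 n (j,r) then (1:ℝ) else 0)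
      = A1 n a c := by
  rw [Finset.sum_congr rfl (fun j _ => sum_ite_W1 a c j), sum_three, A1]; ring

lemma sumj_W1_sq (a c : Fin n) :
    (∑ j : Fin n, (∑ r : Fin n, if W1 n (a,c) ≤ W1 n (j,r) then (1:ℝ) else 0)^2)
      = A2 n a c := by
  have h : ∀ j : Fin n, (∑ r : Fin n, if W1 n (a,c) ≤ W1 n (j,r) then (1:ℝ) else 0)^2
      = if a.val < j.val then ((n:ℝ))^2 else if j = a then ((n:ℝ) - c.val)^2 else 0 := by
    intro j; rw [sum_ite_W1]; split_ifs <;> ring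
  rw [Finset.sum_congr rfl (fun j _ => h j), sum_three, A2]; ring

lemma sumj_W2 (a c : Fin n) :
    (∑ j : Fin n, ∑ r : Fin n, if W2 n (a,c) ≤ W2 n (j,r) then (1:ℝ) else 0)
      = B1 n a c := by
  rw [Finset.sum_congr rfl (fun j _ => sum_ite_W2 a c j), Finset.sum_add_distrib,
    count_ge, Finset.sum_const, B1]
  simp only [Finset.card_univ, Fintype.card_fin, nsmul_eq_mul]
  try ring

lemma sumj_W2_sq (a c : Fin n) :
    (∑ j : Fin n, (∑ r : Fin n, if W2 n (a,c) ≤ W2 n (j,r) then (1:ℝ) else 0)^2)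
      = B2 n a c := by
  have h : ∀ j : Fin n, (∑ r : Fin n, if W2 n (a,c) ≤ W2 n (j,r) then (1:ℝ) else 0)^2
      = if a.val ≤ j.val then ((n:ℝ) - c.val)^2 else ((n:ℝ)-1-c.val)^2 := by
    intro j; rw [sum_ite_W2]; split_ifs <;> ring
  rw [Finset.sum_congr rfl (fun j _ => h j), sum_two, B2]

lemma hcg (S : Fin n → ℝ) : (∑ j : Fin n, (n:ℝ) * (S j / n)) = ∑ j, S j :=
  Finset.sum_congr rfl fun j _ => by
    rw [mul_comm, div_mul_cancel₀ _ (npos (n:=n)).ne']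

lemma hcg2 (S : Fin n → ℝ) : (∑ j : Fin n, (n:ℝ) * ((S j / n)^2)) = (∑ j, (S j)^2) / n := by
  rw [Finset.sum_div]
  refine Finset.sum_congr rfl fun j _ => ?_
  have hn := (npos (n:=n)).ne'
  field_simp

lemma Fden_W1_eval (a c : Fin n) : Fden (W1 n) (W1 n (a,c))
    = A1 n a c/((n:ℝ)*n) - (A1 n a c/((n:ℝ)*n))^2 := by
  rw [Fden, Fintype.sum_prod_type, sumj_W1]

lemma Fden_W2_eval (a c : Fin n) : Fden (W2 n) (W2 n (a,c))
    = B1 n a c/((n:ℝ)*n) - (B1 n a c/((n:ℝ)*n))^2 := by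
  rw [Fden, Fintype.sum_prod_type, sumj_W2]

lemma Fnum_W1_eval (a c : Fin n) : Fnum (W1 n) (W1 n (a,c))
    = (A2 n a c/(n:ℝ))/((n:ℝ)*n) - (A1 n a c/((n:ℝ)*n))^2 := by
  rw [Fnum]
  have h1 : (∑ ω : Om n, gW (W1 n) (W1 n (a,c)) ω) = A1 n a c := by
    rw [Fintype.sum_prod_type]
    dsimp +instances only [gW]
    simp only [Finset.sum_const, Finset.card_univ, Fintype.card_fin, nsmul_eq_mul]
    rw [hcg, sumj_W1]
  have h2 : (∑ ω : Om n, (gW (W1 n) (W1 n (a,c)) ω)^2) = A2 n a c / n := by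
    rw [Fintype.sum_prod_type]
    dsimp +instances only [gW]
    simp only [Finset.sum_const, Finset.card_univ, Fintype.card_fin, nsmul_eq_mul]
    rw [hcg2, sumj_W1_sq]
  rw [h1, h2]

lemma Fnum_W2_eval (a c : Fin n) : Fnum (W2 n) (W2 n (a,c))
    = (B2 n a c/(n:ℝ))/((n:ℝ)*n) - (B1 n a c/((n:ℝ)*n))^2 := by
  rw [Fnum]
  have h1 : (∑ ω : Om n, gW (W2 n) (W2 n (a,c)) ω) = B1 n a c := by
    rw [Fintype.sum_prod_type]
    dsimp +instances only [gW]
    simp only [Finset.sum_const, Finset.card_univ, Fintype.card_fin, nsmul_eq_mul]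
    rw [hcg, sumj_W2]
  have h2 : (∑ ω : Om n, (gW (W2 n) (W2 n (a,c)) ω)^2) = B2 n a c / n := by
    rw [Fintype.sum_prod_type]
    dsimp +instances only [gW]
    simp only [Finset.sum_const, Finset.card_univ, Fintype.card_fin, nsmul_eq_mul]
    rw [hcg2, sumj_W2_sq]
  rw [h1, h2]

/-! ### Summation identities -/

lemma gauss1 (m : ℕ) : ∑ i ∈ Finset.range m, (i:ℝ) = m*(m-1)/2 := by
  induction m with
  | zero => simp
  | succ k ih => rw [Finset.sum_range_succ, ih]; push_cast; ring

lemma gauss2 (m : ℕ) : ∑ i ∈ Finset.range m, (i:ℝ)^2 = m*(m-1)*(2*m-1)/6 := by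
  induction m with
  | zero => simp
  | succ k ih => rw [Finset.sum_range_succ, ih]; push_cast; ring

lemma sum_quad (m : ℕ) (p q r : ℝ) :
    ∑ i ∈ Finset.range m, (p + q*(i:ℝ) + r*(i:ℝ)^2)
      = m*p + q*(m*(m-1)/2) + r*(m*(m-1)*(2*m-1)/6) := by
  rw [Finset.sum_add_distrib, Finset.sum_add_distrib, ← Finset.mul_sum, ← Finset.mul_sum,
    gauss1, gauss2, Finset.sum_const, Finset.card_range, nsmul_eq_mul]

lemma double_sum_eq (m : ℕ) (hm : 0 < m) (f : ℕ → ℝ) :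
    (∑ a ∈ Finset.range m, ∑ c ∈ Finset.range m, f (m*a + c))
      = ∑ i ∈ Finset.range (m*m), f i := by
  rw [← Finset.sum_product']
  refine Finset.sum_nbij' (fun p => m*p.1 + p.2) (fun i => (i/m, i%m)) ?_ ?_ ?_ ?_ ?_
  · rintro ⟨a, c⟩ hp
    simp only [Finset.mem_product, Finset.mem_range] at hp
    simp only [Finset.mem_range]
    calc m*a + c < m*a + m := by omega
    _ = m*(a+1) := by ring
    _ ≤ m*m := Nat.mul_le_mul_left m hp.1
  · intro i hi
    simp only [Finset.mem_range] at hi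
    simp only [Finset.mem_product, Finset.mem_range]
    exact ⟨Nat.div_lt_of_lt_mul (by omega), Nat.mod_lt _ hm⟩
  · rintro ⟨a, c⟩ hp
    simp only [Finset.mem_product, Finset.mem_range] at hp
    have h1 : (m*a + c)/m = a := by
      rw [Nat.mul_add_div hm, Nat.div_eq_of_lt hp.2, add_zero]
    have h2 : (m*a + c)%m = c := by
      rw [Nat.add_mod, Nat.mul_mod_right, Nat.mod_eq_of_lt hp.2]
      simp [Nat.mod_eq_of_lt hp.2]
    simp [h1, h2]
  · intro i _
    simp [Nat.div_add_mod]
  · intro p _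
    rfl

def fD (n : ℕ) (i : ℕ) : ℝ :=
  ((n:ℝ)*n - i)/((n:ℝ)*n) - (((n:ℝ)*n - i)/((n:ℝ)*n))^2

lemma A1_cast (a c : Fin n) : A1 n a c = (n:ℝ)*n - ((n*a.val + c.val : ℕ) : ℝ) := by
  rw [A1]; push_cast; ring

lemma D1_eq : (∑ ω : Om n, Fden (W1 n) (W1 n ω))
    = ∑ i ∈ Finset.range (n*n), fD n i := by
  rw [Fintype.sum_prod_type]
  have h1 : ∀ a c : Fin n, Fden (W1 n) (W1 n (a,c)) = fD n (n*a.val + c.val) := by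
    intro a c
    rw [Fden_W1_eval, A1_cast, fD]
  calc (∑ a : Fin n, ∑ c : Fin n, Fden (W1 n) (W1 n (a, c)))
      = ∑ a : Fin n, ∑ c : Fin n, fD n (n*a.val + c.val) := by
        exact Finset.sum_congr rfl fun a _ => Finset.sum_congr rfl fun c _ => h1 a c
    _ = ∑ a ∈ Finset.range n, ∑ c : Fin n, fD n (n*a + c.val) := by
        rw [Fin.sum_univ_eq_sum_range (fun av => ∑ c : Fin n, fD n (n*av + c.val))]
    _ = ∑ a ∈ Finset.range n, ∑ c ∈ Finset.range n, fD n (n*a + c) := by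
        exact Finset.sum_congr rfl fun a _ =>
          Fin.sum_univ_eq_sum_range (fun cv => fD n (n*a + cv)) n
    _ = ∑ i ∈ Finset.range (n*n), fD n i :=
        double_sum_eq n (Nat.pos_of_ne_zero (NeZero.ne n)) (fD n)

lemma D1_ge (hn2 : 2 ≤ n) : ((n:ℝ)*n)/8 ≤ ∑ ω : Om n, Fden (W1 n) (W1 n ω) := by
  rw [D1_eq]
  have hm : (0:ℝ) < (n:ℝ)*n := mul_pos npos npos
  have h2 : ∀ i ∈ Finset.range (n*n), fD n i
      = 0 + (1/((n:ℝ)*n))*(i:ℝ) + (-(1/(((n:ℝ)*n)^2)))*(i:ℝ)^2 := by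
    intro i _
    rw [fD]
    field_simp
    ring
  rw [Finset.sum_congr rfl h2, sum_quad]
  have hcast : ((n*n : ℕ) : ℝ) = (n:ℝ)*n := by push_cast; ring
  rw [hcast]
  have hn4 : (4:ℝ) ≤ (n:ℝ)*n := by
    have : (2:ℝ) ≤ (n:ℝ) := by exact_mod_cast hn2
    nlinarith
  set M : ℝ := (n:ℝ)*n with hM
  have key : M*0 + 1/M*(M*(M-1)/2) + -(1/M^2)*(M*(M-1)*(2*M-1)/6) - M/8
      = (M^2-4)/(24*M) := by
    field_simp
    ring
  have h4 : (0:ℝ) ≤ (M^2-4)/(24*M) := by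
    apply div_nonneg
    · nlinarith
    · nlinarith
  linarith

lemma D2_eq_D1 : (∑ ω : Om n, Fden (W2 n) (W2 n ω)) = ∑ ω : Om n, Fden (W1 n) (W1 n ω) := by
  rw [Fintype.sum_prod_type, Fintype.sum_prod_type]
  calc (∑ a : Fin n, ∑ c : Fin n, Fden (W2 n) (W2 n (a, c)))
      = ∑ a : Fin n, ∑ c : Fin n, (A1 n c a/((n:ℝ)*n) - (A1 n c a/((n:ℝ)*n))^2) :=
        Finset.sum_congr rfl fun a _ => Finset.sum_congr rfl fun c _ => Fden_W2_eval a c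
    _ = ∑ c : Fin n, ∑ a : Fin n, (A1 n c a/((n:ℝ)*n) - (A1 n c a/((n:ℝ)*n))^2) :=
        Finset.sum_comm
    _ = ∑ a : Fin n, ∑ c : Fin n, Fden (W1 n) (W1 n (a, c)) :=
        Finset.sum_congr rfl fun x _ => Finset.sum_congr rfl fun y _ =>
          (Fden_W1_eval x y).symm

lemma diff_term (a c : Fin n) :
    Fden (W1 n) (W1 n (a,c)) - Fnum (W1 n) (W1 n (a,c))
      = ((n:ℝ)-c.val)*c.val/((n:ℝ)*n*n) := by
  rw [Fden_W1_eval, Fnum_W1_eval, A1, A2]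
  have hn := (npos (n:=n)).ne'
  field_simp
  ring

lemma diff_term_bounds (a c : Fin n) :
    0 ≤ ((n:ℝ)-c.val)*c.val/((n:ℝ)*n*n)
    ∧ ((n:ℝ)-c.val)*c.val/((n:ℝ)*n*n) ≤ 1/(4*n) := by
  have hn := npos (n:=n)
  have hc0 : (0:ℝ) ≤ c.val := Nat.cast_nonneg _
  have hcn : (c.val:ℝ) ≤ n := by exact_mod_cast c.isLt.le
  constructor
  · apply div_nonneg (mul_nonneg (by linarith) hc0) (by positivity)
  · rw [div_le_div_iff₀ (by positivity) (by positivity)]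
    nlinarith [sq_nonneg ((n:ℝ) - 2*c.val)]

lemma ND1_lb : (∑ ω : Om n, Fden (W1 n) (W1 n ω)) - (n:ℝ)/4
    ≤ ∑ ω : Om n, Fnum (W1 n) (W1 n ω) := by
  have h : (∑ ω : Om n, Fden (W1 n) (W1 n ω)) - (∑ ω : Om n, Fnum (W1 n) (W1 n ω))
      = ∑ ω : Om n, ((n:ℝ)-ω.2.val)*ω.2.val/((n:ℝ)*n*n) := by
    rw [← Finset.sum_sub_distrib]
    exact Finset.sum_congr rfl fun ω _ => diff_term ω.1 ω.2
  have hb : (∑ ω : Om n, ((n:ℝ)-ω.2.val)*ω.2.val/((n:ℝ)*n*n)) ≤ (n:ℝ)/4 := by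
    calc (∑ ω : Om n, ((n:ℝ)-ω.2.val)*ω.2.val/((n:ℝ)*n*n))
        ≤ ∑ _ω : Om n, 1/(4*(n:ℝ)) :=
          Finset.sum_le_sum fun ω _ => (diff_term_bounds ω.1 ω.2).2
      _ = (n:ℝ)/4 := by
          rw [Finset.sum_const, Finset.card_univ]
          simp only [Fintype.card_prod, Fintype.card_fin, nsmul_eq_mul]
          have hn := (npos (n:=n)).ne'
          field_simp
          push_cast
          ring
  linarith

lemma ND1_ub : (∑ ω : Om n, Fnum (W1 n) (W1 n ω)) ≤ ∑ ω : Om n, Fden (W1 n) (W1 n ω) := by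
  have h : (∑ ω : Om n, Fden (W1 n) (W1 n ω)) - (∑ ω : Om n, Fnum (W1 n) (W1 n ω))
      = ∑ ω : Om n, ((n:ℝ)-ω.2.val)*ω.2.val/((n:ℝ)*n*n) := by
    rw [← Finset.sum_sub_distrib]
    exact Finset.sum_congr rfl fun ω _ => diff_term ω.1 ω.2
  have hb : 0 ≤ ∑ ω : Om n, ((n:ℝ)-ω.2.val)*ω.2.val/((n:ℝ)*n*n) :=
    Finset.sum_nonneg fun ω _ => (diff_term_bounds ω.1 ω.2).1
  linarith

lemma e2_term (a c : Fin n) :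
    Fnum (W2 n) (W2 n (a,c)) = (a.val:ℝ)*((n:ℝ)-a.val)/(((n:ℝ)*n)^2) := by
  rw [Fnum_W2_eval, B1, B2]
  have hn := (npos (n:=n)).ne'
  field_simp
  ring

lemma ND2_ub : (∑ ω : Om n, Fnum (W2 n) (W2 n ω)) ≤ 1/4 := by
  have hn := npos (n:=n)
  calc (∑ ω : Om n, Fnum (W2 n) (W2 n ω))
      ≤ ∑ _ω : Om n, 1/(4*((n:ℝ)*n)) := by
        refine Finset.sum_le_sum fun ω _ => ?_
        rw [show (ω : Om n) = (ω.1, ω.2) from rfl, e2_term]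
        have ha0 : (0:ℝ) ≤ ω.1.val := Nat.cast_nonneg _
        have han : (ω.1.val:ℝ) ≤ n := by exact_mod_cast ω.1.isLt.le
        rw [div_le_div_iff₀ (by positivity) (by positivity)]
        nlinarith [sq_nonneg ((n:ℝ) - 2*ω.1.val)]
    _ = 1/4 := by
        rw [Finset.sum_const, Finset.card_univ]
        simp only [Fintype.card_prod, Fintype.card_fin, nsmul_eq_mul]
        have hn' := hn.ne'
        field_simp
        push_cast
        ring

lemma ND2_lb : 0 ≤ ∑ ω : Om n, Fnum (W2 n) (W2 n ω) := by
  refine Finset.sum_nonneg fun ω _ => ?_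
  rw [show (ω : Om n) = (ω.1, ω.2) from rfl, e2_term]
  have hn := npos (n:=n)
  have han : (ω.1.val:ℝ) ≤ n := by exact_mod_cast ω.1.isLt.le
  apply div_nonneg (mul_nonneg (Nat.cast_nonneg _) (by linarith)) (by positivity)

/-! ### The categorical variable and the two labellings -/

def Yn (n : ℕ) : Om n → ℕ := fun ω => n * ω.1.val + ω.2.val + 1
def l2 (n : ℕ) : ℕ → ℕ := fun y => n * ((y-1) % n) + (y-1)/n + 1

lemma Yn_mem (ω : Om n) : Yn n ω ∈ Finset.Icc 1 (n*n) := by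
  have h1 := ω.1.isLt
  have h2 := ω.2.isLt
  have : n * ω.1.val + ω.2.val + 1 ≤ n * n := by
    have : n * (ω.1.val + 1) ≤ n * n := Nat.mul_le_mul_left n h1
    rw [Nat.mul_succ] at this
    omega
  simp only [Finset.mem_Icc, Yn]
  omega

lemma W1_eq : (fun ω : Om n => ((id (Yn n ω) : ℕ) : ℝ)) = W1 n := rfl

lemma l2_Yn (ω : Om n) : l2 n (Yn n ω) = n * ω.2.val + ω.1.val + 1 := by
  have h2 := ω.2.isLt
  simp only [l2, Yn, Nat.add_sub_cancel]
  rw [Nat.mul_add_mod, Nat.mod_eq_of_lt h2, Nat.mul_add_div hn0,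
    Nat.div_eq_of_lt h2, add_zero]

lemma W2_eq : (fun ω : Om n => ((l2 n (Yn n ω) : ℕ) : ℝ)) = W2 n := by
  funext ω
  rw [l2_Yn]
  rfl

lemma l2_mapsTo : Set.MapsTo (l2 n) (Set.Icc 1 (n*n)) (Set.Icc 1 (n*n)) := by
  intro y hy
  simp only [Set.mem_Icc] at hy ⊢
  have h1 : (y-1) % n < n := Nat.mod_lt _ hn0
  have h2 : (y-1) / n < n := Nat.div_lt_of_lt_mul (by omega)
  constructor
  · simp [l2]
  · have : n * ((y-1)%n + 1) ≤ n * n := Nat.mul_le_mul_left n h1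
    rw [Nat.mul_succ] at this
    simp only [l2]
    omega

lemma l2_invol : ∀ y ∈ Set.Icc 1 (n*n), l2 n (l2 n y) = y := by
  intro y hy
  simp only [Set.mem_Icc] at hy
  have h1 : (y-1) % n < n := Nat.mod_lt _ hn0
  have h2 : (y-1) / n < n := Nat.div_lt_of_lt_mul (by omega)
  simp only [l2, Nat.add_sub_cancel]
  rw [Nat.mul_add_mod, Nat.mod_eq_of_lt h2, Nat.mul_add_div hn0, Nat.div_eq_of_lt h2, add_zero]
  have := Nat.div_add_mod (y-1) n
  omega

lemma l2_bijOn : Set.BijOn (l2 n) (Set.Icc 1 (n*n)) (Set.Icc 1 (n*n)) :=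
  Set.InvOn.bijOn ⟨l2_invol, l2_invol⟩ l2_mapsTo l2_mapsTo

lemma Yn_pos (k : ℕ) (hk : k ∈ Finset.Icc 1 (n*n)) : 0 < Pn n {ω | Yn n ω = k} := by
  simp only [Finset.mem_Icc] at hk
  have h1 : (k-1) / n < n := Nat.div_lt_of_lt_mul (by omega)
  have h2 : (k-1) % n < n := Nat.mod_lt _ hn0
  set ω₀ : Om n := (⟨(k-1)/n, h1⟩, ⟨(k-1)%n, h2⟩) with hω₀
  have hmem : ω₀ ∈ {ω : Om n | Yn n ω = k} := by
    simp only [Set.mem_setOf_eq, Yn, hω₀]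
    have := Nat.div_add_mod (k-1) n
    omega
  calc (0:ℝ≥0∞) < ((n:ℝ≥0∞) * n)⁻¹ := by
        refine ENNReal.inv_pos.mpr (ENNReal.mul_ne_top (ENNReal.natCast_ne_top n)
          (ENNReal.natCast_ne_top n))
    _ = Pn n {ω₀} := (Pn_singleton ω₀).symm
    _ ≤ Pn n {ω | Yn n ω = k} := measure_mono (Set.singleton_subset_iff.mpr hmem)

/-! ### The final bound -/

lemma final (hn2 : 2 ≤ n) (ε : ℝ) (hε : 3/(n:ℝ) < ε) :
    xi (Pn n) (Xn n) (W1 n) - xi (Pn n) (Xn n) (W2 n) > 1 - ε := by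
  have hnpos := npos (n:=n)
  have hn2' : (2:ℝ) ≤ (n:ℝ) := by exact_mod_cast hn2
  rw [xi_eq (W1 n) (measurable_of_countable _), xi_eq (W2 n) (measurable_of_countable _),
    D2_eq_D1]
  set D := ∑ ω : Om n, Fden (W1 n) (W1 n ω) with hD
  set N1 := ∑ ω : Om n, Fnum (W1 n) (W1 n ω) with hN1
  set N2 := ∑ ω : Om n, Fnum (W2 n) (W2 n ω) with hN2
  have hDge : ((n:ℝ)*n)/8 ≤ D := D1_ge hn2
  have hD0 : 0 < D := lt_of_lt_of_le (by positivity) hDge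
  have h1 : N1/D - N2/D = (N1 - N2)/D := (sub_div _ _ _).symm
  have h2 : (D - ((n:ℝ)/4 + 1/4))/D ≤ (N1 - N2)/D := by
    apply (div_le_div_iff_of_pos_right hD0).mpr
    have := ND1_lb (n:=n)
    have := ND2_ub (n:=n)
    rw [← hD, ← hN1] at *
    linarith
  have h3 : (D - ((n:ℝ)/4 + 1/4))/D = 1 - ((n:ℝ)/4 + 1/4)/D := by
    rw [sub_div, div_self hD0.ne']
  have h4 : ((n:ℝ)/4 + 1/4)/D ≤ 3/(n:ℝ) := by
    calc ((n:ℝ)/4 + 1/4)/D ≤ ((n:ℝ)/4 + 1/4)/(((n:ℝ)*n)/8) :=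
          div_le_div_of_nonneg_left (by positivity) (by positivity) hDge
      _ ≤ 3/(n:ℝ) := by
          rw [div_le_div_iff₀ (by positivity) hnpos]
          nlinarith
  rw [h1]
  linarith

end P1

/-- Proposition 1: the value of Chatterjee's `ξ` applied to a categorical `Y` (encoded as
integers `1,…,K`) can depend arbitrarily strongly on the chosen bijective labelling. -/
theorem proposition1 (ε : ℝ) (hε0 : 0 < ε) (hε1 : ε < 1) :
    ∃ (Ω : Type) (_ : MeasurableSpace Ω) (P : Measure Ω) (_ : IsProbabilityMeasure P)
      (K : ℕ) (_ : 2 ≤ K) (X : Ω → ℝ) (Y : Ω → ℕ),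
      Measurable X ∧ Measurable Y ∧ (∀ ω, Y ω ∈ Finset.Icc 1 K) ∧
      (∀ k ∈ Finset.Icc 1 K, 0 < P {ω | Y ω = k}) ∧
      ∃ ℓ₁ ℓ₂ : ℕ → ℕ,
        Set.BijOn ℓ₁ (Set.Icc 1 K) (Set.Icc 1 K) ∧
        Set.BijOn ℓ₂ (Set.Icc 1 K) (Set.Icc 1 K) ∧
        xi P X (fun ω => (ℓ₁ (Y ω) : ℝ)) - xi P X (fun ω => (ℓ₂ (Y ω) : ℝ)) > 1 - ε := by
  obtain ⟨n, hn2, hε'⟩ : ∃ n : ℕ, 2 ≤ n ∧ 3/(n:ℝ) < ε := by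
    refine ⟨max 2 (⌈3/ε⌉₊ + 1), le_max_left _ _, ?_⟩
    set n := max 2 (⌈3/ε⌉₊ + 1) with hn
    have hn1 : (⌈3/ε⌉₊ + 1 : ℕ) ≤ n := le_max_right _ _
    have hnR : (3:ℝ)/ε < (n:ℝ) := by
      have hceil := Nat.le_ceil (3/ε)
      have hc : ((⌈3/ε⌉₊ + 1 : ℕ):ℝ) ≤ (n:ℝ) := by exact_mod_cast hn1
      push_cast at hc
      linarith
    have hn0' : (0:ℝ) < (n:ℝ) := lt_trans (by positivity) hnR
    rw [div_lt_iff₀ hn0']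
    have h3 : (3:ℝ) < (n:ℝ) * ε := by
      have := (div_lt_iff₀ hε0).mp hnR
      linarith
    linarith [mul_comm (n:ℝ) ε]
  haveI : NeZero n := ⟨by omega⟩
  refine ⟨P1.Om n, inferInstance, P1.Pn n, inferInstance, n*n, ?_, P1.Xn n, P1.Yn n,
    P1.measurable_Xn, measurable_of_countable _, P1.Yn_mem, fun k hk => P1.Yn_pos k hk,
    id, P1.l2 n, Set.bijOn_id _, P1.l2_bijOn, ?_⟩
  · calc 2 ≤ n := hn2
      _ ≤ n*n := Nat.le_mul_of_pos_left n (by omega)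
  · rw [show (fun ω : P1.Om n => ((id (P1.Yn n ω) : ℕ) : ℝ)) = P1.W1 n from P1.W1_eq,
      show (fun ω : P1.Om n => ((P1.l2 n (P1.Yn n ω) : ℕ) : ℝ)) = P1.W2 n from P1.W2_eq]
    exact P1.final hn2 ε hε'

end
end

section
/- Suppose Y = f(X,U) almost surely, where U, U′ are Uniform(0,1) random variables with X, U, U′ jointly independent, and set Y′ := f(X,U′). Then there exists a Borel measurable function h : ℋ → {1,…,K} with Y = h(X) almost surely if and only if there exists a bijection ℓ of {1,…,K} with Y = ℓ(Y′) almost surely. -/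
open MeasureTheory ProbabilityTheory Filter Set

noncomputable section

/-- Indicator (as a real-valued function) of the event `Y = k`. -/
def ind {Ω : Type*} (Y : Ω → ℕ) (k : ℕ) : Ω → ℝ := fun ω => if Y ω = k then 1 else 0

/-- `Q_k(X) = P(Y = k ∣ X)`, the conditional expectation of `1{Y=k}` given `σ(X)`. -/
def condProb {Ω H : Type*} [MeasurableSpace Ω] [MeasurableSpace H]
    (P : Measure Ω) (X : Ω → H) (Y : Ω → ℕ) (k : ℕ) : Ω → ℝ :=
  P[ind Y k | MeasurableSpace.comap X inferInstance]

/-- `f(x,u) = min{k ∈ {1,…,K} : Σ_{j=1}^k g_j(x) > u}`. -/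
def catf (K : ℕ) {H : Type*} (g : ℕ → H → ℝ) (x : H) (u : ℝ) : ℕ :=
  sInf {k | k ∈ Finset.Icc 1 K ∧ u < ∑ j ∈ Finset.Icc 1 k, g j x}

lemma catf_sandwich {H : Type*} (K : ℕ) (g : ℕ → H → ℝ) (x : H) {u1 u u2 : ℝ}
    (h1 : u1 ≤ u) (h2 : u ≤ u2) (heq : catf K g x u1 = catf K g x u2) :
    catf K g x u = catf K g x u1 := by
  set S : ℝ → Set ℕ := fun v => {k | k ∈ Finset.Icc 1 K ∧ v < ∑ j ∈ Finset.Icc 1 k, g j x}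
    with hS
  have sub21 : S u2 ⊆ S u := fun k hk => ⟨hk.1, lt_of_le_of_lt h2 hk.2⟩
  have subu1 : S u ⊆ S u1 := fun k hk => ⟨hk.1, lt_of_le_of_lt h1 hk.2⟩
  have hc : ∀ v, catf K g x v = sInf (S v) := fun v => rfl
  rcases (S u2).eq_empty_or_nonempty with hA | hA
  · have h2z : catf K g x u2 = 0 := by rw [hc, hA, Nat.sInf_empty]
    have h1z : catf K g x u1 = 0 := heq.trans h2z
    have hS1 : S u1 = ∅ := by
      rcases Nat.sInf_eq_zero.1 (by rw [hc] at h1z; exact h1z) with h0 | he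
      · exact absurd h0.1 (by simp)
      · exact he
    have : S u = ∅ := Set.eq_empty_of_subset_empty (hS1 ▸ subu1)
    rw [hc, this, Nat.sInf_empty, h1z]
  · have hAu : (S u).Nonempty := ⟨_, sub21 hA.some_mem⟩
    have l1 : sInf (S u1) ≤ sInf (S u) := Nat.sInf_le (subu1 (Nat.sInf_mem hAu))
    have l2 : sInf (S u) ≤ sInf (S u2) := Nat.sInf_le (sub21 (Nat.sInf_mem hA))
    rw [hc, hc] at heq ⊢
    omega

lemma measurable_catf {α H : Type*} [MeasurableSpace α] [MeasurableSpace H] (K : ℕ)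
    (g : ℕ → H → ℝ) (hgm : ∀ k, Measurable (g k)) {X : α → H} {V : α → ℝ}
    (hX : Measurable X) (hV : Measurable V) :
    Measurable (fun a => catf K g (X a) (V a)) := by
  apply measurable_to_countable'
  intro n
  set Q : ℕ → α → Prop := fun m a =>
    m ∈ Finset.Icc 1 K ∧ V a < ∑ j ∈ Finset.Icc 1 m, g j (X a) with hQdef
  have hQ : ∀ m, MeasurableSet {a | Q m a} := by
    intro m
    have h1 : Measurable fun a => ∑ j ∈ Finset.Icc 1 m, g j (X a) :=
      Finset.measurable_sum _ (fun j _ => (hgm j).comp hX)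
    have : {a | Q m a} = {a | m ∈ Finset.Icc 1 K} ∩ {a | V a < ∑ j ∈ Finset.Icc 1 m, g j (X a)} := by
      ext a; simp [hQdef, Set.mem_setOf_eq]
    rw [this]
    exact (MeasurableSet.const _).inter (measurableSet_lt hV h1)
  have key : ∀ a, catf K g (X a) (V a) = n ↔
      ((Q n a ∧ ∀ m ∈ Finset.Icc 1 K, Q m a → n ≤ m) ∨
        (n = 0 ∧ ∀ m ∈ Finset.Icc 1 K, ¬ Q m a)) := by
    intro a
    have hc : catf K g (X a) (V a) = sInf {k | Q k a} := rfl
    rw [hc]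
    constructor
    · intro h
      rcases ({k | Q k a}).eq_empty_or_nonempty with hA | hA
      · right
        refine ⟨by rw [hA, Nat.sInf_empty] at h; omega, fun m _ hm => ?_⟩
        exact absurd hm (by rw [Set.eq_empty_iff_forall_notMem] at hA; exact hA m)
      · left
        exact ⟨h ▸ Nat.sInf_mem hA, fun m _ hm => h ▸ Nat.sInf_le hm⟩
    · rintro (⟨hn, hlb⟩ | ⟨rfl, hemp⟩)
      · have hmem := Nat.sInf_mem (⟨n, hn⟩ : Set.Nonempty {k | Q k a})
        exact le_antisymm (Nat.sInf_le hn) (hlb _ hmem.1 hmem)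
      · have : {k | Q k a} = ∅ := by
          rw [Set.eq_empty_iff_forall_notMem]
          exact fun k hk => hemp k hk.1 hk
        rw [this, Nat.sInf_empty]
  have hset : (fun a => catf K g (X a) (V a)) ⁻¹' {n} =
      ({a | Q n a} ∩ ⋂ m ∈ Finset.Icc 1 K, {a | Q m a → n ≤ m}) ∪
        ({a | n = 0} ∩ ⋂ m ∈ Finset.Icc 1 K, {a | ¬ Q m a}) := by
    ext a
    simp only [Set.mem_preimage, Set.mem_singleton_iff, key a, Set.mem_union, Set.mem_inter_iff,
      Set.mem_iInter, Set.mem_setOf_eq]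
  rw [hset]
  have himp : ∀ m, MeasurableSet {a | Q m a → n ≤ m} := by
    intro m
    by_cases hnm : n ≤ m
    · simp only [hnm, imp_true_iff]; exact MeasurableSet.univ
    · have : {a | Q m a → n ≤ m} = {a | Q m a}ᶜ := by ext a; simp [hnm]
      rw [this]; exact (hQ m).compl
  exact ((hQ n).inter (MeasurableSet.biInter ((Finset.Icc 1 K : Finset ℕ).countable_toSet) fun m _ => himp m)).union
    ((MeasurableSet.const _).inter (MeasurableSet.biInter (Finset.Icc 1 K : Finset ℕ).countable_toSet fun m _ => (hQ m).compl))

lemma catf_eq_of_ind {H : Type*} {K : ℕ} {g : ℕ → H → ℝ} {x : H} {y : ℕ}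
    (hy : y ∈ Finset.Icc 1 K)
    (hind : ∀ j ∈ Finset.Icc 1 K, g j x = if y = j then 1 else 0) {u : ℝ}
    (hu : u ∈ Set.Ioo (0:ℝ) 1) : catf K g x u = y := by
  rw [Finset.mem_Icc] at hy
  have hsum : ∀ m, m ≤ K → ∑ j ∈ Finset.Icc 1 m, g j x = if y ∈ Finset.Icc 1 m then 1 else 0 := by
    intro m hm
    rw [Finset.sum_congr rfl (fun j hj => hind j (by rw [Finset.mem_Icc] at hj ⊢; omega))]
    exact Finset.sum_ite_eq _ _ _
  have hc : catf K g x u = sInf {k | k ∈ Finset.Icc 1 K ∧ u < ∑ j ∈ Finset.Icc 1 k, g j x} := rfl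
  have hyA : y ∈ {k | k ∈ Finset.Icc 1 K ∧ u < ∑ j ∈ Finset.Icc 1 k, g j x} := by
    refine ⟨by rw [Finset.mem_Icc]; omega, ?_⟩
    rw [hsum y hy.2, if_pos (by rw [Finset.mem_Icc]; omega)]
    exact hu.2
  have hlb : ∀ m ∈ {k | k ∈ Finset.Icc 1 K ∧ u < ∑ j ∈ Finset.Icc 1 k, g j x}, y ≤ m := by
    rintro m ⟨hm1, hm2⟩
    by_contra hlt
    push_neg at hlt
    rw [Finset.mem_Icc] at hm1
    rw [hsum m hm1.2, if_neg (by rw [Finset.mem_Icc]; omega)] at hm2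
    exact absurd (hu.1.trans hm2) (lt_irrefl 0)
  rw [hc]
  exact le_antisymm (Nat.sInf_le hyA) (hlb _ (Nat.sInf_mem ⟨y, hyA⟩))

/-- Lemma 2 (ii): with `Y = f(X,U)` a.s. and `Y' = f(X,U')` for `X, U, U'` jointly
independent and `U, U'` uniform on `(0,1)`, there is a Borel measurable
`h : ℋ → {1,…,K}` with `Y = h(X)` a.s. if and only if there is a bijection `ℓ` of
`{1,…,K}` with `Y = ℓ(Y')` a.s.
(Joint independence of `X, U, U'` is encoded as `X ⟂ (U,U')` together with `U ⟂ U'`.) -/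
theorem lemma_x_ind_y_ii {Ω H : Type*} [MeasurableSpace Ω] [MetricSpace H]
    [MeasurableSpace H] [BorelSpace H] [TopologicalSpace.SeparableSpace H]
    (P : Measure Ω) [IsProbabilityMeasure P] (K : ℕ) (hK : 2 ≤ K)
    (X : Ω → H) (Y : Ω → ℕ) (hX : Measurable X) (hY : Measurable Y)
    (hYr : ∀ ω, Y ω ∈ Finset.Icc 1 K)
    (hp : ∀ k ∈ Finset.Icc 1 K, 0 < P {ω | Y ω = k})
    (g : ℕ → H → ℝ) (hgm : ∀ k, Measurable (g k))
    (hgr : ∀ k x, g k x ∈ Set.Icc (0 : ℝ) 1)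
    (hg : ∀ k ∈ Finset.Icc 1 K, (fun ω => g k (X ω)) =ᵐ[P] condProb P X Y k)
    (U U' : Ω → ℝ) (hU : Measurable U) (hU' : Measurable U')
    (hUdist : Measure.map U P = volume.restrict (Set.Ioo (0 : ℝ) 1))
    (hU'dist : Measure.map U' P = volume.restrict (Set.Ioo (0 : ℝ) 1))
    (hindep : IndepFun X (fun ω => (U ω, U' ω)) P)
    (hUU' : IndepFun U U' P)
    (hYf : Y =ᵐ[P] fun ω => catf K g (X ω) (U ω)) :
    (∃ h : H → ℕ, Measurable h ∧ (∀ x, h x ∈ Finset.Icc 1 K) ∧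
        Y =ᵐ[P] fun ω => h (X ω)) ↔
      (∃ ℓ : ℕ → ℕ, Set.BijOn ℓ (Set.Icc 1 K) (Set.Icc 1 K) ∧
        Y =ᵐ[P] fun ω => ℓ (catf K g (X ω) (U' ω))) := by
  constructor
  · rintro ⟨h, hhm, hhr, hYh⟩
    refine ⟨id, Set.bijOn_id _, ?_⟩
    have hm : MeasurableSpace.comap X inferInstance ≤ ‹MeasurableSpace Ω› := hX.comap_le
    have hcond : ∀ k : ℕ, condProb P X Y k =ᵐ[P] ind Y k := by
      intro k
      have hae : ind Y k =ᵐ[P] ind (fun ω => h (X ω)) k :=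
        hYh.mono fun ω hω => by simp only [ind, hω]
      have hXm : Measurable[MeasurableSpace.comap X inferInstance] X :=
        Measurable.of_comap_le le_rfl
      have hψ : Measurable fun x => if h x = k then (1:ℝ) else 0 :=
        Measurable.ite (hhm (measurableSet_singleton k)) measurable_const measurable_const
      have hsm : StronglyMeasurable[MeasurableSpace.comap X inferInstance]
          (ind (fun ω => h (X ω)) k) := (hψ.comp hXm).stronglyMeasurable
      have hint : Integrable (ind (fun ω => h (X ω)) k) P := by
        refine (integrable_const (1:ℝ)).mono' (hψ.comp hX).aestronglyMeasurable ?_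
        filter_upwards with ω
        simp only [ind]
        split <;> simp
      calc condProb P X Y k
          =ᵐ[P] P[ind (fun ω => h (X ω)) k | MeasurableSpace.comap X inferInstance] :=
            condExp_congr_ae hae
        _ = ind (fun ω => h (X ω)) k := condExp_of_stronglyMeasurable hm hsm hint
        _ =ᵐ[P] ind Y k := hae.symm
    have hgind : ∀ᵐ ω ∂P, ∀ k : ℕ, k ∈ Finset.Icc 1 K → g k (X ω) = ind Y k ω := by
      rw [ae_all_iff]
      intro k
      by_cases hk : k ∈ Finset.Icc 1 K
      · exact ((hg k hk).trans (hcond k)).mono fun ω hω => fun _ => hω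
      · exact Eventually.of_forall fun ω hk' => absurd hk' hk
    have hU'Ioo : ∀ᵐ ω ∂P, U' ω ∈ Set.Ioo (0:ℝ) 1 :=
      ae_of_ae_map hU'.aemeasurable (hU'dist ▸ ae_restrict_mem measurableSet_Ioo)
    filter_upwards [hgind, hU'Ioo] with ω h1 h2
    simp only [id_eq]
    exact (catf_eq_of_ind (hYr ω) (fun j hj => h1 j hj) h2).symm
  · rintro ⟨ℓ, hbij, hYℓ⟩
    haveI hμP : IsProbabilityMeasure (Measure.map X P) :=
      Measure.isProbabilityMeasure_map hX.aemeasurable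
    haveI hlamP : IsProbabilityMeasure (volume.restrict (Set.Ioo (0:ℝ) 1)) := by
      constructor
      rw [Measure.restrict_apply MeasurableSet.univ, Set.univ_inter, Real.volume_Ioo]
      norm_num
    have hpair : Measurable fun ω => (U ω, U' ω) := hU.prodMk hU'
    have hνeq : Measure.map (fun ω => (U ω, U' ω)) P =
        (volume.restrict (Set.Ioo (0:ℝ) 1)).prod (volume.restrict (Set.Ioo (0:ℝ) 1)) := by
      rw [(indepFun_iff_map_prod_eq_prod_map_map hU.aemeasurable hU'.aemeasurable).1 hUU',
        hUdist, hU'dist]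
    have hT : Measurable fun ω => (X ω, (U ω, U' ω)) := hX.prodMk hpair
    have hmapT : Measure.map (fun ω => (X ω, (U ω, U' ω))) P =
        (Measure.map X P).prod
          ((volume.restrict (Set.Ioo (0:ℝ) 1)).prod (volume.restrict (Set.Ioo (0:ℝ) 1))) := by
      rw [(indepFun_iff_map_prod_eq_prod_map_map hX.aemeasurable hpair.aemeasurable).1 hindep,
        hνeq]
    have hF1 : Measurable fun p : H × (ℝ × ℝ) => catf K g p.1 p.2.1 :=
      measurable_catf K g hgm measurable_fst (measurable_fst.comp measurable_snd)
    have hF2 : Measurable fun p : H × (ℝ × ℝ) => ℓ (catf K g p.1 p.2.2) :=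
      measurable_from_top.comp
        (measurable_catf K g hgm measurable_fst (measurable_snd.comp measurable_snd))
    have hEm : MeasurableSet {p : H × (ℝ × ℝ) | catf K g p.1 p.2.1 = ℓ (catf K g p.1 p.2.2)} := by
      have hrw : {p : H × (ℝ × ℝ) | catf K g p.1 p.2.1 = ℓ (catf K g p.1 p.2.2)} =
          ⋃ n : ℕ, ((fun p : H × (ℝ × ℝ) => catf K g p.1 p.2.1) ⁻¹' {n}) ∩
            ((fun p : H × (ℝ × ℝ) => ℓ (catf K g p.1 p.2.2)) ⁻¹' {n}) := by
        ext p
        simp only [Set.mem_setOf_eq, Set.mem_iUnion, Set.mem_inter_iff, Set.mem_preimage,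
          Set.mem_singleton_iff]
        constructor
        · intro hh; exact ⟨_, hh, rfl⟩
        · rintro ⟨n, h1, h2⟩; rw [h1, h2]
      rw [hrw]
      exact MeasurableSet.iUnion fun n =>
        (hF1 (measurableSet_singleton n)).inter (hF2 (measurableSet_singleton n))
    have hTE : ∀ᵐ ω ∂P, (X ω, (U ω, U' ω)) ∈
        {p : H × (ℝ × ℝ) | catf K g p.1 p.2.1 = ℓ (catf K g p.1 p.2.2)} := by
      filter_upwards [hYf, hYℓ] with ω h1 h2
      show catf K g (X ω) (U ω) = ℓ (catf K g (X ω) (U' ω))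
      rw [← h1]; exact h2
    have hprodae : ∀ᵐ p ∂((Measure.map X P).prod
        ((volume.restrict (Set.Ioo (0:ℝ) 1)).prod (volume.restrict (Set.Ioo (0:ℝ) 1)))),
        p ∈ {p : H × (ℝ × ℝ) | catf K g p.1 p.2.1 = ℓ (catf K g p.1 p.2.2)} := by
      rw [← hmapT]
      exact (ae_map_iff hT.aemeasurable hEm).2 hTE
    have hxae := Measure.ae_ae_of_ae_prod hprodae
    have hΦ : ∀ᵐ x ∂(Measure.map X P), ∀ u ∈ Set.Ioo (0:ℝ) 1,
        catf K g x u = catf K g x (1/2) := by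
      filter_upwards [hxae] with x hx
      have hswap : ∀ᵐ q ∂((volume.restrict (Set.Ioo (0:ℝ) 1)).prod
          (volume.restrict (Set.Ioo (0:ℝ) 1))), catf K g x q.2 = ℓ (catf K g x q.1) :=
        (Measure.measurePreserving_swap).quasiMeasurePreserving.ae hx
      have h2 := Measure.ae_ae_of_ae_prod hswap
      haveI : (ae (volume.restrict (Set.Ioo (0:ℝ) 1))).NeBot :=
        ae_neBot.2 (IsProbabilityMeasure.ne_zero _)
      obtain ⟨u0, hu0⟩ := h2.exists
      set c := ℓ (catf K g x u0) with hc
      have hN : volume.restrict (Set.Ioo (0:ℝ) 1) {u | ¬ catf K g x u = c} = 0 := hu0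
      have hfind : ∀ a b : ℝ, 0 ≤ a → a < b → b ≤ 1 → ∃ v ∈ Set.Ioo a b, catf K g x v = c := by
        intro a b ha hab hb
        by_contra hcon
        push_neg at hcon
        have hsub : Set.Ioo a b ⊆ {v | ¬ catf K g x v = c} := fun v hv => hcon v hv
        have hmeas : volume.restrict (Set.Ioo (0:ℝ) 1) (Set.Ioo a b) = ENNReal.ofReal (b - a) := by
          rw [Measure.restrict_apply measurableSet_Ioo,
            Set.inter_eq_left.2 (Set.Ioo_subset_Ioo (by linarith) (by linarith)), Real.volume_Ioo]
        have hle := measure_mono (μ := volume.restrict (Set.Ioo (0:ℝ) 1)) hsub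
        rw [hmeas, hN] at hle
        have hpos : (0:ℝ) < b - a := by linarith
        have hz : ENNReal.ofReal (b - a) = 0 := le_antisymm hle zero_le
        rw [ENNReal.ofReal_eq_zero] at hz
        linarith
      have hconst : ∀ u ∈ Set.Ioo (0:ℝ) 1, catf K g x u = c := by
        rintro u ⟨hu0', hu1'⟩
        obtain ⟨v1, hv1m, hv1⟩ := hfind 0 u le_rfl hu0' (le_of_lt hu1')
        obtain ⟨v2, hv2m, hv2⟩ := hfind u 1 (le_of_lt hu0') hu1' le_rfl
        have := catf_sandwich K g x (le_of_lt hv1m.2) (le_of_lt hv2m.1) (hv1.trans hv2.symm)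
        rw [this, hv1]
      intro u hu
      rw [hconst u hu, hconst (1/2) (by norm_num)]
    refine ⟨fun x => if catf K g x (1/2) ∈ Finset.Icc 1 K then catf K g x (1/2) else 1,
      ?_, ?_, ?_⟩
    · have hcm : Measurable fun x : H => catf K g x (1/2) :=
        measurable_catf K g hgm measurable_id measurable_const
      exact Measurable.ite (hcm ((Set.to_countable _).measurableSet)) hcm measurable_const
    · intro x
      by_cases hmem : catf K g x (1/2) ∈ Finset.Icc 1 K
      · dsimp only; rw [if_pos hmem]; exact hmem
      · dsimp only; rw [if_neg hmem, Finset.mem_Icc]; omega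
    · have hUIoo : ∀ᵐ ω ∂P, U ω ∈ Set.Ioo (0:ℝ) 1 :=
        ae_of_ae_map hU.aemeasurable (hUdist ▸ ae_restrict_mem measurableSet_Ioo)
      filter_upwards [hYf, hUIoo, ae_of_ae_map hX.aemeasurable hΦ] with ω h1 h2 h3
      have hkey : catf K g (X ω) (1/2) = Y ω := by rw [← h3 (U ω) h2, ← h1]
      simp only [hkey, hYr ω, if_pos]
end
end

section
/- The dependence coefficient satisfies 0 ≤ ψ(X,Y) ≤ 1. Moreover, ψ is invariant under relabelling of the categories: for every bijection ℓ of {1,…,K}, ψ(X, ℓ∘Y) = ψ(X,Y), where ψ(X, ℓ∘Y) is defined with the level probabilities P(ℓ(Y)=k) and conditional probabilities P(ℓ(Y)=k ∣ X) of ℓ∘Y. -/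
open MeasureTheory ProbabilityTheory Filter Set

noncomputable section

lemma integrable_of_abs_le {Ω : Type*} {m0 : MeasurableSpace Ω} {P : Measure Ω} [IsFiniteMeasure P]
    {f : Ω → ℝ} {B : ℝ} (hf : AEStronglyMeasurable f P) (hb : ∀ᵐ ω ∂P, |f ω| ≤ B) :
    Integrable f P :=
  Integrable.mono' (integrable_const B) hf
    (by filter_upwards [hb] with ω h using by rwa [Real.norm_eq_abs])

lemma mul_integrable_of_bound {Ω : Type*} {m0 : MeasurableSpace Ω} {P : Measure Ω}
    [IsFiniteMeasure P] {f g : Ω → ℝ} {B C : ℝ} (hf : Measurable f) (hg : Measurable g)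
    (hbf : ∀ᵐ ω ∂P, |f ω| ≤ B) (hbg : ∀ᵐ ω ∂P, |g ω| ≤ C) :
    Integrable (fun ω => f ω * g ω) P := by
  refine integrable_of_abs_le (B := |B| * |C|) ((hf.mul hg).aestronglyMeasurable) ?_
  filter_upwards [hbf, hbg] with ω h1 h2
  rw [abs_mul]
  exact mul_le_mul (h1.trans (le_abs_self B)) (h2.trans (le_abs_self C)) (abs_nonneg _)
    (abs_nonneg _)

/-- L² contraction property of conditional expectation (via 0 ≤ ∫ (f - E[f|m])²). -/
lemma integral_sq_condexp_le {Ω : Type*} {m m0 : MeasurableSpace Ω} (hm : m ≤ m0)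
    (P : Measure Ω) [IsProbabilityMeasure P] {f : Ω → ℝ} {B : ℝ}
    (hfm : Measurable f) (hb : ∀ ω, |f ω| ≤ B) :
    ∫ ω, (P[f|m]) ω * (P[f|m]) ω ∂P ≤ ∫ ω, f ω * f ω ∂P := by
  set φ := P[f|m] with hφ
  have hC : ∀ ω, |f ω| ≤ |B| := fun ω => (hb ω).trans (le_abs_self B)
  have hf : Integrable f P := integrable_of_abs_le hfm.aestronglyMeasurable (ae_of_all _ hC)
  have hφm : Measurable φ := (stronglyMeasurable_condExp.mono hm).measurable
  have hφb : ∀ᵐ ω ∂P, |φ ω| ≤ |B| := by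
    have h1 : φ ≤ᵐ[P] fun _ => |B| := by
      have := condExp_mono (m := m) hf (integrable_const |B|)
        (ae_of_all _ fun ω => (abs_le.1 (hC ω)).2)
      rwa [condExp_const hm] at this
    have h2 : (fun _ : Ω => -|B|) ≤ᵐ[P] φ := by
      have := condExp_mono (m := m) (integrable_const (-|B|)) hf
        (ae_of_all _ fun ω => (abs_le.1 (hC ω)).1)
      rwa [condExp_const hm] at this
    filter_upwards [h1, h2] with ω e1 e2
    rw [abs_le]; exact ⟨e2, e1⟩
  have hff : Integrable (fun ω => f ω * f ω) P :=
    mul_integrable_of_bound hfm hfm (ae_of_all _ hC) (ae_of_all _ hC)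
  have hφφ : Integrable (fun ω => φ ω * φ ω) P := mul_integrable_of_bound hφm hφm hφb hφb
  have hφf : Integrable (fun ω => φ ω * f ω) P :=
    mul_integrable_of_bound hφm hfm hφb (ae_of_all _ hC)
  have key : ∫ ω, φ ω * f ω ∂P = ∫ ω, φ ω * φ ω ∂P := by
    have hpull : P[φ * f|m] =ᵐ[P] φ * P[f|m] :=
      condExp_mul_of_stronglyMeasurable_left stronglyMeasurable_condExp hφf hf
    have hφf' : Integrable (φ * f) P := hφf
    calc ∫ ω, φ ω * f ω ∂P = ∫ ω, (P[φ * f|m]) ω ∂P := (integral_condExp hm (f := φ * f)).symm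
      _ = ∫ ω, (φ * P[f|m]) ω ∂P := integral_congr_ae hpull
      _ = ∫ ω, φ ω * φ ω ∂P := rfl
  have h0 : 0 ≤ ∫ ω, (f ω - φ ω) * (f ω - φ ω) ∂P :=
    integral_nonneg fun ω => mul_self_nonneg _
  have expand : ∫ ω, (f ω - φ ω) * (f ω - φ ω) ∂P
      = ∫ ω, f ω * f ω ∂P - 2 * ∫ ω, φ ω * f ω ∂P + ∫ ω, φ ω * φ ω ∂P := by
    have hrw : (fun ω => (f ω - φ ω) * (f ω - φ ω))
        = fun ω => (f ω * f ω - 2 * (φ ω * f ω)) + φ ω * φ ω := by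
      funext ω; ring
    have hs1 : Integrable (fun ω => f ω * f ω - 2 * (φ ω * f ω)) P := hff.sub (hφf.const_mul 2)
    have hs2 : Integrable (fun ω => 2 * (φ ω * f ω)) P := hφf.const_mul 2
    rw [hrw, integral_add hs1 hφφ, integral_sub hff hs2, integral_const_mul]
  linarith [key, h0, expand]


/-- `p_k = P(Y = k)`. -/
def levelProb {Ω : Type*} [MeasurableSpace Ω] (P : Measure Ω) (Y : Ω → ℕ) (k : ℕ) : ℝ :=
  (P {ω | Y ω = k}).toReal

/-- Covariance of two real-valued random variables. -/
def cov {Ω : Type*} [MeasurableSpace Ω] (P : Measure Ω) (f g : Ω → ℝ) : ℝ :=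
  ∫ ω, f ω * g ω ∂P - (∫ ω, f ω ∂P) * (∫ ω, g ω ∂P)

section KeyBound

variable {Ω : Type*} {m m0 : MeasurableSpace Ω} {P : Measure Ω} [IsProbabilityMeasure P]
  {K : ℕ} {Y : Ω → ℕ}

lemma basic_facts (hm : m ≤ m0) (hY : Measurable Y) (hYr : ∀ ω, Y ω ∈ Finset.Icc 1 K) :
    True := trivial

lemma key_bound (hm : m ≤ m0) (hK : 2 ≤ K) (hY : Measurable Y)
    (hYr : ∀ ω, Y ω ∈ Finset.Icc 1 K)
    (hp : ∀ k ∈ Finset.Icc 1 K, 0 < P {ω | Y ω = k}) :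
    ∑ k ∈ Finset.Icc 1 K, ∑ l ∈ Finset.Icc 1 K,
      (cov P (P[ind Y k|m]) (P[ind Y l|m])) ^ 2 / (levelProb P Y k * levelProb P Y l)
      ≤ (K : ℝ) - 1 := by
  set Ks := Finset.Icc 1 K with hKs
  set p : ℕ → ℝ := fun k => levelProb P Y k with hpdef
  set Q : ℕ → Ω → ℝ := fun k => P[ind Y k|m] with hQdef
  -- basic facts about indicators
  have hindm : ∀ k, Measurable (ind Y k) := by
    intro k
    unfold ind
    exact Measurable.ite (hY (measurableSet_singleton k)) measurable_const measurable_const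
  have hindb : ∀ k ω, |ind Y k ω| ≤ 1 := by
    intro k ω; unfold ind; split <;> norm_num
  have hindint : ∀ k, Integrable (ind Y k) P :=
    fun k => integrable_of_abs_le (hindm k).aestronglyMeasurable (ae_of_all _ (hindb k))
  have hintegral_ind : ∀ k, ∫ ω, ind Y k ω ∂P = p k := by
    intro k
    have hrw : ind Y k = Set.indicator {ω | Y ω = k} fun _ => (1 : ℝ) := by
      funext ω; simp [ind, Set.indicator_apply]
    rw [hrw, integral_indicator_const (1 : ℝ)
      (show MeasurableSet {ω | Y ω = k} from hY (measurableSet_singleton k))]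
    simp [hpdef, levelProb, measureReal_def]
  -- facts about p
  have hp0 : ∀ k, 0 ≤ p k := fun k => ENNReal.toReal_nonneg
  have hp1 : ∀ k, p k ≤ 1 := by
    intro k
    have h1 : P {ω | Y ω = k} ≤ 1 := prob_le_one
    have := ENNReal.toReal_mono (by norm_num) h1
    simpa [hpdef, levelProb] using this
  have hppos : ∀ k ∈ Ks, 0 < p k := fun k hk =>
    ENNReal.toReal_pos (hp k hk).ne' (measure_ne_top _ _)
  have hsump : ∑ k ∈ Ks, p k = 1 := by
    have hdisj : (Ks : Set ℕ).PairwiseDisjoint fun k => {ω | Y ω = k} := by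
      intro a _ b _ hab
      refine Set.disjoint_left.2 fun ω ha hb => hab ?_
      rw [← ha, ← hb]
    have hmeas : ∀ k ∈ Ks, MeasurableSet {ω | Y ω = k} :=
      fun k _ => hY (measurableSet_singleton k)
    have hunion : ⋃ k ∈ Ks, {ω | Y ω = k} = Set.univ := by
      ext ω
      simp only [Set.mem_iUnion, Set.mem_setOf_eq, Set.mem_univ, iff_true]
      exact ⟨Y ω, hYr ω, rfl⟩
    have hsum : ∑ k ∈ Ks, P {ω | Y ω = k} = 1 := by
      rw [← measure_biUnion_finset hdisj hmeas, hunion, measure_univ]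
    calc ∑ k ∈ Ks, p k = (∑ k ∈ Ks, P {ω | Y ω = k}).toReal := by
          rw [ENNReal.toReal_sum (fun k _ => measure_ne_top _ _)]
          simp [hpdef, levelProb]
      _ = 1 := by rw [hsum]; norm_num
  -- facts about Q
  have hQm : ∀ k, Measurable (Q k) := fun k => (stronglyMeasurable_condExp.mono hm).measurable
  have hQint : ∀ k, Integrable (Q k) P := fun k => integrable_condExp
  have hQ0 : ∀ k, 0 ≤ᵐ[P] Q k := by
    intro k
    refine condExp_nonneg (ae_of_all _ fun ω => ?_)
    simp only [Pi.zero_apply, ind]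
    split <;> norm_num
  have hQ1 : ∀ k, Q k ≤ᵐ[P] fun _ => 1 := by
    intro k
    have := condExp_mono (m := m) (hindint k) (integrable_const (1 : ℝ))
      (ae_of_all _ fun ω => (abs_le.1 (hindb k ω)).2)
    rwa [condExp_const hm] at this
  have hQb : ∀ k, ∀ᵐ ω ∂P, |Q k ω| ≤ 1 := by
    intro k
    filter_upwards [hQ0 k, hQ1 k] with ω e0 e1
    rw [abs_le]
    have e0' : (0:ℝ) ≤ Q k ω := by simpa using e0
    exact ⟨by linarith, e1⟩
  have hip : ∀ k, ∫ ω, Q k ω ∂P = p k := fun k =>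
    (integral_condExp hm).trans (hintegral_ind k)
  -- centered variables
  set Z : ℕ → Ω → ℝ := fun k ω => Q k ω - p k with hZdef
  have hZm : ∀ k, Measurable (Z k) := fun k => (hQm k).sub measurable_const
  have hZb : ∀ k, ∀ᵐ ω ∂P, |Z k ω| ≤ 2 := by
    intro k
    filter_upwards [hQb k] with ω e
    have h1 : |Z k ω| ≤ |Q k ω| + |p k| := by
      simp only [hZdef, sub_eq_add_neg]
      exact (abs_add_le _ _).trans (by rw [abs_neg])
    have h2 : |p k| ≤ 1 := by rw [abs_of_nonneg (hp0 k)]; exact hp1 k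
    linarith
  have hZint : ∀ k, Integrable (Z k) P := fun k =>
    integrable_of_abs_le (hZm k).aestronglyMeasurable (hZb k)
  have hQQint : ∀ k l, Integrable (fun ω => Q k ω * Q l ω) P := fun k l =>
    mul_integrable_of_bound (hQm k) (hQm l) (hQb k) (hQb l)
  have hZZint : ∀ k l, Integrable (fun ω => Z k ω * Z l ω) P := fun k l =>
    mul_integrable_of_bound (hZm k) (hZm l) (hZb k) (hZb l)
  have hZZ : ∀ k l, ∫ ω, Z k ω * Z l ω ∂P = cov P (Q k) (Q l) := by
    intro k l
    have hrw : (fun ω => Z k ω * Z l ω)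
        = fun ω => (Q k ω * Q l ω - p k * Q l ω) - (p l * Q k ω - p k * p l) := by
      funext ω; simp only [hZdef]; ring
    have hi1 : Integrable (fun ω => p k * Q l ω) P := (hQint l).const_mul _
    have hi2 : Integrable (fun ω => p l * Q k ω) P := (hQint k).const_mul _
    have hi3 : Integrable (fun ω => Q k ω * Q l ω - p k * Q l ω) P := (hQQint k l).sub hi1
    have hi4 : Integrable (fun ω => p l * Q k ω - p k * p l) P := hi2.sub (integrable_const _)
    rw [hrw, integral_sub hi3 hi4, integral_sub (hQQint k l) hi1, integral_sub hi2
      (integrable_const _), integral_const_mul, integral_const_mul, integral_const, hip, hip]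
    simp only [cov, hip, measure_univ, probReal_univ, smul_eq_mul, one_mul]
    ring
  -- representation of functions of Y as combinations of indicators
  have hrep : ∀ (v : ℕ → ℝ) ω, v (Y ω) = ∑ l ∈ Ks, v l * ind Y l ω := by
    intro v ω
    rw [Finset.sum_eq_single (Y ω)]
    · simp [ind]
    · intro b _ hb
      have : Y ω ≠ b := fun h => hb h.symm
      simp [ind, this]
    · intro h; exact absurd (hYr ω) h
  have hvint : ∀ v : ℕ → ℝ, Integrable (fun ω => v (Y ω)) P := by
    intro v
    have : (fun ω => v (Y ω)) = fun ω => ∑ l ∈ Ks, v l * ind Y l ω := funext fun ω => hrep v ω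
    rw [this]
    exact integrable_finset_sum _ fun l _ => (hindint l).const_mul _
  have hvintegral : ∀ v : ℕ → ℝ, ∫ ω, v (Y ω) ∂P = ∑ l ∈ Ks, v l * p l := by
    intro v
    have hfe : (fun ω => v (Y ω)) = fun ω => ∑ l ∈ Ks, v l * ind Y l ω := funext fun ω => hrep v ω
    rw [hfe, integral_finset_sum _ fun l _ => (hindint l).const_mul _]
    exact Finset.sum_congr rfl fun l _ => by rw [integral_const_mul, hintegral_ind]
  -- the quadratic form bound
  have hquad : ∀ w : ℕ → ℝ,
      ∫ ω, (∑ l ∈ Ks, w l * Z l ω) * (∑ l ∈ Ks, w l * Z l ω) ∂P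
        ≤ ∑ l ∈ Ks, (w l) ^ 2 * p l := by
    intro w
    set c : ℝ := ∑ l ∈ Ks, w l * p l with hc
    set h : Ω → ℝ := fun ω => w (Y ω) - c with hhdef
    have hhm : Measurable h := (measurable_from_top.comp hY).sub measurable_const
    have hBw : ∀ ω, |w (Y ω)| ≤ ∑ l ∈ Ks, |w l| := fun ω =>
      Finset.single_le_sum (f := fun l => |w l|) (fun i _ => abs_nonneg _) (hYr ω)
    have hhb : ∀ ω, |h ω| ≤ (∑ l ∈ Ks, |w l|) + |c| := by
      intro ω
      have : |h ω| ≤ |w (Y ω)| + |c| := by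
        simp only [hhdef, sub_eq_add_neg]
        exact (abs_add_le _ _).trans (by rw [abs_neg])
      linarith [hBw ω]
    have hhint : Integrable h P :=
      integrable_of_abs_le hhm.aestronglyMeasurable (ae_of_all _ hhb)
    -- conditional expectation of h is the linear combination of the Z's
    have hsmul : ∀ l : ℕ, P[fun ω => w l * ind Y l ω|m] =ᵐ[P] fun ω => w l * Q l ω := by
      intro l
      have := condExp_smul (μ := P) (m := m) (w l) (ind Y l)
      exact this
    have hae : ∀ᵐ ω ∂P, ∀ l : ℕ, (P[fun ω => w l * ind Y l ω|m]) ω = w l * Q l ω :=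
      ae_all_iff.2 hsmul
    have hsum := condExp_finsetSum (μ := P) (m := m)
      (f := fun l => fun ω => w l * ind Y l ω) (s := Ks)
      (fun l _ => (hindint l).const_mul _)
    have hPh : P[h|m] =ᵐ[P] fun ω => ∑ l ∈ Ks, w l * Z l ω := by
      have h1 : h = (∑ l ∈ Ks, fun ω => w l * ind Y l ω) - (fun _ => c) := by
        funext ω
        simp only [Pi.sub_apply, Finset.sum_apply, hhdef]
        rw [hrep w ω]
      have h2 : P[h|m] =ᵐ[P] P[∑ l ∈ Ks, fun ω => w l * ind Y l ω|m] - fun _ => c := by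
        rw [h1]
        exact (condExp_sub (integrable_finset_sum' _ fun l _ => (hindint l).const_mul _)
          (integrable_const c) _).trans (by rw [condExp_const hm])
      refine h2.trans ?_
      filter_upwards [hsum, hae] with ω e1 e2
      simp only [Pi.sub_apply, Finset.sum_apply, e1]
      rw [Finset.sum_congr rfl fun l _ => e2 l]
      simp only [hZdef, hc, mul_sub, Finset.sum_sub_distrib]
    -- contraction
    have hcontr := integral_sq_condexp_le hm P hhm hhb
    have heq1 : ∫ ω, (∑ l ∈ Ks, w l * Z l ω) * (∑ l ∈ Ks, w l * Z l ω) ∂P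
        = ∫ ω, (P[h|m]) ω * (P[h|m]) ω ∂P :=
      integral_congr_ae ((hPh.mul hPh).symm)
    -- compute ∫ h²
    have hvv : ∀ ω, w (Y ω) * w (Y ω) = ∑ l ∈ Ks, (w l * w l) * ind Y l ω := fun ω =>
      hrep (fun l => w l * w l) ω
    have hwYint : Integrable (fun ω => w (Y ω)) P := hvint w
    have hwY2int : Integrable (fun ω => w (Y ω) * w (Y ω)) P := by
      have := hvint (fun l => w l * w l)
      simpa [hvv] using this
    have hintwY : ∫ ω, w (Y ω) ∂P = c := hvintegral w
    have hinth2 : ∫ ω, h ω * h ω ∂P = (∑ l ∈ Ks, (w l) ^ 2 * p l) - c ^ 2 := by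
      have hrw : (fun ω => h ω * h ω)
          = fun ω => (w (Y ω) * w (Y ω) - 2 * (c * w (Y ω))) + c * c := by
        funext ω; simp only [hhdef]; ring
      have hi1 : Integrable (fun ω => 2 * (c * w (Y ω))) P := (hwYint.const_mul c).const_mul 2
      have hi2 : Integrable (fun ω => w (Y ω) * w (Y ω) - 2 * (c * w (Y ω))) P := hwY2int.sub hi1
      rw [hrw, integral_add hi2 (integrable_const _), integral_sub hwY2int hi1,
        integral_const_mul, integral_const_mul, hintwY, integral_const]
      have : ∫ ω, w (Y ω) * w (Y ω) ∂P = ∑ l ∈ Ks, (w l) ^ 2 * p l := by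
        have := hvintegral (fun l => w l * w l)
        rw [show (fun ω => w (Y ω) * w (Y ω)) = fun ω => (fun l => w l * w l) (Y ω) from rfl]
        rw [this]
        exact Finset.sum_congr rfl fun l _ => by ring
      rw [this]
      simp [measure_univ]
      ring
    have hc2 : (0:ℝ) ≤ c ^ 2 := sq_nonneg c
    calc ∫ ω, (∑ l ∈ Ks, w l * Z l ω) * (∑ l ∈ Ks, w l * Z l ω) ∂P
        = ∫ ω, (P[h|m]) ω * (P[h|m]) ω ∂P := heq1
      _ ≤ ∫ ω, h ω * h ω ∂P := hcontr
      _ = (∑ l ∈ Ks, (w l) ^ 2 * p l) - c ^ 2 := hinth2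
      _ ≤ ∑ l ∈ Ks, (w l) ^ 2 * p l := by linarith
  -- per-row bound
  show ∑ k ∈ Ks, ∑ l ∈ Ks, (cov P (Q k) (Q l)) ^ 2 / (p k * p l) ≤ (K : ℝ) - 1
  have key : ∀ j ∈ Ks, ∑ l ∈ Ks, (cov P (Q j) (Q l)) ^ 2 / (p j * p l) ≤ 1 - p j := by
    intro j hj
    have hpj : 0 < p j := hppos j hj
    set w : ℕ → ℝ := fun l => cov P (Q j) (Q l) / p l with hw
    set t : ℝ := ∑ l ∈ Ks, (cov P (Q j) (Q l)) ^ 2 / p l with ht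
    set g : Ω → ℝ := fun ω => ∑ l ∈ Ks, w l * Z l ω with hgdef
    have hgm : Measurable g := by
      apply Finset.measurable_sum
      exact fun l _ => (hZm l).const_mul _
    have hZall : ∀ᵐ ω ∂P, ∀ l : ℕ, |Z l ω| ≤ 2 := ae_all_iff.2 hZb
    have hgb : ∀ᵐ ω ∂P, |g ω| ≤ ∑ l ∈ Ks, |w l| * 2 := by
      filter_upwards [hZall] with ω e
      calc |g ω| ≤ ∑ l ∈ Ks, |w l * Z l ω| := Finset.abs_sum_le_sum_abs _ _
        _ ≤ ∑ l ∈ Ks, |w l| * 2 := Finset.sum_le_sum fun l _ => by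
            rw [abs_mul]; exact mul_le_mul_of_nonneg_left (e l) (abs_nonneg _)
    have hZgint : Integrable (fun ω => Z j ω * g ω) P :=
      mul_integrable_of_bound (hZm j) hgm (hZb j) hgb
    have hggint : Integrable (fun ω => g ω * g ω) P :=
      mul_integrable_of_bound hgm hgm hgb hgb
    have h1 : ∫ ω, Z j ω * g ω ∂P = t := by
      have hrw : (fun ω => Z j ω * g ω) = fun ω => ∑ l ∈ Ks, w l * (Z j ω * Z l ω) := by
        funext ω
        simp only [hgdef, Finset.mul_sum]
        exact Finset.sum_congr rfl fun l _ => by ring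
      rw [hrw, integral_finset_sum _ fun l hl => ((hZZint j l).const_mul _), ht]
      refine Finset.sum_congr rfl fun l hl => ?_
      rw [integral_const_mul, hZZ j l]
      simp only [hw]
      have hpl := (hppos l hl).ne'
      field_simp
    have h2 : ∫ ω, g ω * g ω ∂P ≤ t := by
      refine (hquad w).trans_eq ?_
      rw [ht]
      refine Finset.sum_congr rfl fun l hl => ?_
      simp only [hw]
      have hpl := (hppos l hl).ne'
      field_simp
    have h3 : ∫ ω, Z j ω * Z j ω ∂P ≤ p j - p j * p j := by
      have e1 : ∫ ω, Z j ω * Z j ω ∂P = ∫ ω, Q j ω * Q j ω ∂P - p j * p j := by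
        rw [hZZ j j]
        simp only [cov, hip]
      have e2 : ∫ ω, Q j ω * Q j ω ∂P ≤ ∫ ω, Q j ω ∂P := by
        refine integral_mono_ae (hQQint j j) (hQint j) ?_
        filter_upwards [hQ0 j, hQ1 j] with ω u0 u1
        have u0' : (0:ℝ) ≤ Q j ω := by simpa using u0
        nlinarith
      rw [e1]
      rw [hip j] at e2
      linarith
    have h4 : (0:ℝ) ≤ ∫ ω, (Z j ω - g ω) * (Z j ω - g ω) ∂P :=
      integral_nonneg fun ω => mul_self_nonneg _
    have h5 : ∫ ω, (Z j ω - g ω) * (Z j ω - g ω) ∂P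
        = ∫ ω, Z j ω * Z j ω ∂P - 2 * ∫ ω, Z j ω * g ω ∂P + ∫ ω, g ω * g ω ∂P := by
      have hrw : (fun ω => (Z j ω - g ω) * (Z j ω - g ω))
          = fun ω => (Z j ω * Z j ω - 2 * (Z j ω * g ω)) + g ω * g ω := by
        funext ω; ring
      have hi1 : Integrable (fun ω => 2 * (Z j ω * g ω)) P := hZgint.const_mul 2
      have hi2 : Integrable (fun ω => Z j ω * Z j ω - 2 * (Z j ω * g ω)) P := (hZZint j j).sub hi1
      rw [hrw, integral_add hi2 hggint, integral_sub (hZZint j j) hi1, integral_const_mul]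
    have ht_le : t ≤ p j - p j * p j := by
      rw [h1] at h5
      linarith
    have hconv : ∑ l ∈ Ks, (cov P (Q j) (Q l)) ^ 2 / (p j * p l) = t / p j := by
      rw [ht, Finset.sum_div]
      refine Finset.sum_congr rfl fun l hl => ?_
      rw [div_div]
      ring_nf
    rw [hconv, div_le_iff₀ hpj]
    nlinarith
  have hcard : (Ks.card : ℝ) = K := by rw [hKs, Nat.card_Icc]; simp
  calc ∑ k ∈ Ks, ∑ l ∈ Ks, (cov P (Q k) (Q l)) ^ 2 / (p k * p l)
      ≤ ∑ k ∈ Ks, (1 - p k) := Finset.sum_le_sum key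
    _ = (K : ℝ) - 1 := by
        rw [Finset.sum_sub_distrib, Finset.sum_const, hsump, nsmul_eq_mul, mul_one, hcard]

end KeyBound

/-- The dependence coefficient
`ψ(X,Y) = (1/(K−1)) Σ_{k,l=1}^K Cov(Q_k(X), Q_l(X))² / (p_k p_l)`. -/
def psi {Ω H : Type*} [MeasurableSpace Ω] [MeasurableSpace H]
    (P : Measure Ω) (X : Ω → H) (Y : Ω → ℕ) (K : ℕ) : ℝ :=
  (1 / ((K : ℝ) - 1)) * ∑ k ∈ Finset.Icc 1 K, ∑ l ∈ Finset.Icc 1 K,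
    (cov P (condProb P X Y k) (condProb P X Y l)) ^ 2 / (levelProb P Y k * levelProb P Y l)

/-- Theorem 1, part (M1) and permutation invariance: `0 ≤ ψ(X,Y) ≤ 1`, and `ψ` is
invariant under bijective relabellings of the categories `{1,…,K}`. -/
theorem psi_range_and_perm_invariant {Ω H : Type*} [MeasurableSpace Ω] [MetricSpace H]
    [MeasurableSpace H] [BorelSpace H] [TopologicalSpace.SeparableSpace H]
    (P : Measure Ω) [IsProbabilityMeasure P] (K : ℕ) (hK : 2 ≤ K)
    (X : Ω → H) (Y : Ω → ℕ) (hX : Measurable X) (hY : Measurable Y)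
    (hYr : ∀ ω, Y ω ∈ Finset.Icc 1 K)
    (hp : ∀ k ∈ Finset.Icc 1 K, 0 < P {ω | Y ω = k}) :
    0 ≤ psi P X Y K ∧ psi P X Y K ≤ 1 ∧
      ∀ ℓ : ℕ → ℕ, Set.BijOn ℓ (Set.Icc 1 K) (Set.Icc 1 K) →
        psi P X (fun ω => ℓ (Y ω)) K = psi P X Y K := by
  classical
  have hm : MeasurableSpace.comap X inferInstance ≤ (inferInstance : MeasurableSpace Ω) :=
    hX.comap_le
  have hK1 : (0:ℝ) < (K : ℝ) - 1 := by
    have h2 : (2:ℝ) ≤ (K : ℝ) := by exact_mod_cast hK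
    linarith
  have hlp : ∀ k, 0 ≤ levelProb P Y k := fun k => ENNReal.toReal_nonneg
  have hS_nonneg : 0 ≤ ∑ k ∈ Finset.Icc 1 K, ∑ l ∈ Finset.Icc 1 K,
      (cov P (condProb P X Y k) (condProb P X Y l)) ^ 2
        / (levelProb P Y k * levelProb P Y l) :=
    Finset.sum_nonneg fun k _ => Finset.sum_nonneg fun l _ =>
      div_nonneg (sq_nonneg _) (mul_nonneg (hlp k) (hlp l))
  have hS_le : ∑ k ∈ Finset.Icc 1 K, ∑ l ∈ Finset.Icc 1 K,
      (cov P (condProb P X Y k) (condProb P X Y l)) ^ 2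
        / (levelProb P Y k * levelProb P Y l) ≤ (K : ℝ) - 1 :=
    key_bound hm hK hY hYr hp
  refine ⟨?_, ?_, ?_⟩
  · simp only [psi]
    exact mul_nonneg (by positivity) hS_nonneg
  · simp only [psi]
    have h2 := mul_le_mul_of_nonneg_left hS_le (le_of_lt (by positivity : (0:ℝ) < 1 / ((K:ℝ)-1)))
    calc (1 / ((K : ℝ) - 1)) * ∑ k ∈ Finset.Icc 1 K, ∑ l ∈ Finset.Icc 1 K,
          (cov P (condProb P X Y k) (condProb P X Y l)) ^ 2
            / (levelProb P Y k * levelProb P Y l)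
        ≤ (1 / ((K : ℝ) - 1)) * ((K : ℝ) - 1) := h2
      _ = 1 := by field_simp
  · intro ℓ hbij
    set s : Set ℕ := Set.Icc 1 K with hs
    have hmem : ∀ a : ℕ, a ∈ Finset.Icc 1 K ↔ a ∈ s := by
      intro a; simp [hs, Finset.mem_Icc, Set.mem_Icc]
    set g : ℕ → ℕ := Function.invFunOn ℓ s with hg
    have hginv : Set.MapsTo g s s := hbij.surjOn.mapsTo_invFunOn
    have hgmaps : ∀ a ∈ Finset.Icc 1 K, g a ∈ Finset.Icc 1 K := fun a ha =>
      (hmem _).2 (hginv ((hmem a).1 ha))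
    have hlmaps : ∀ a ∈ Finset.Icc 1 K, ℓ a ∈ Finset.Icc 1 K := fun a ha =>
      (hmem _).2 (hbij.mapsTo ((hmem a).1 ha))
    have hlg : ∀ a ∈ s, ℓ (g a) = a := fun a ha => hbij.surjOn.rightInvOn_invFunOn ha
    have hgl : ∀ a ∈ s, g (ℓ a) = a := fun a ha => hbij.injOn.leftInvOn_invFunOn ha
    have hiff : ∀ k, k ∈ s → ∀ ω, (ℓ (Y ω) = k ↔ Y ω = g k) := by
      intro k hk ω
      have hYs : Y ω ∈ s := (hmem _).1 (hYr ω)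
      constructor
      · intro h
        exact hbij.injOn hYs (hginv hk) (by rw [h, hlg k hk])
      · intro h
        rw [h, hlg k hk]
    have hlevel : ∀ k ∈ Finset.Icc 1 K, levelProb P (fun ω => ℓ (Y ω)) k
        = levelProb P Y (g k) := by
      intro k hk
      have hset : {ω | ℓ (Y ω) = k} = {ω | Y ω = g k} :=
        Set.ext fun ω => hiff k ((hmem k).1 hk) ω
      simp only [levelProb, hset]
    have hcondeq : ∀ k ∈ Finset.Icc 1 K, condProb P X (fun ω => ℓ (Y ω)) k
        = condProb P X Y (g k) := by
      intro k hk
      have hind : ind (fun ω => ℓ (Y ω)) k = ind Y (g k) := by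
        funext ω
        simp only [ind]
        exact if_congr (hiff k ((hmem k).1 hk) ω) rfl rfl
      simp only [condProb, hind]
    have hre : ∀ F : ℕ → ℝ, ∑ k ∈ Finset.Icc 1 K, F (g k) = ∑ k ∈ Finset.Icc 1 K, F k :=
      fun F => Finset.sum_nbij' g ℓ hgmaps hlmaps
        (fun a ha => hlg a ((hmem a).1 ha)) (fun a ha => hgl a ((hmem a).1 ha))
        (fun a _ => rfl)
    simp only [psi]
    congr 1
    calc ∑ k ∈ Finset.Icc 1 K, ∑ l ∈ Finset.Icc 1 K,
          (cov P (condProb P X (fun ω => ℓ (Y ω)) k) (condProb P X (fun ω => ℓ (Y ω)) l)) ^ 2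
            / (levelProb P (fun ω => ℓ (Y ω)) k * levelProb P (fun ω => ℓ (Y ω)) l)
        = ∑ k ∈ Finset.Icc 1 K, ∑ l ∈ Finset.Icc 1 K,
          (cov P (condProb P X Y (g k)) (condProb P X Y (g l))) ^ 2
            / (levelProb P Y (g k) * levelProb P Y (g l)) := by
          refine Finset.sum_congr rfl fun k hk => Finset.sum_congr rfl fun l hl => ?_
          rw [hcondeq k hk, hcondeq l hl, hlevel k hk, hlevel l hl]
      _ = ∑ k ∈ Finset.Icc 1 K, ∑ l ∈ Finset.Icc 1 K,
          (cov P (condProb P X Y (g k)) (condProb P X Y l)) ^ 2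
            / (levelProb P Y (g k) * levelProb P Y l) := by
          refine Finset.sum_congr rfl fun k hk => ?_
          exact hre fun l => (cov P (condProb P X Y (g k)) (condProb P X Y l)) ^ 2
            / (levelProb P Y (g k) * levelProb P Y l)
      _ = ∑ k ∈ Finset.Icc 1 K, ∑ l ∈ Finset.Icc 1 K,
          (cov P (condProb P X Y k) (condProb P X Y l)) ^ 2
            / (levelProb P Y k * levelProb P Y l) :=
          hre fun k => ∑ l ∈ Finset.Icc 1 K,
            (cov P (condProb P X Y k) (condProb P X Y l)) ^ 2
              / (levelProb P Y k * levelProb P Y l)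
end
end

section
/- ψ(X,Y) = 0 if and only if X and Y are independent. -/
open MeasureTheory ProbabilityTheory Filter Set

noncomputable section

set_option linter.unusedSectionVars false

section Aux
variable {Ω : Type*} [MeasurableSpace Ω] {P : Measure Ω} [IsProbabilityMeasure P]
  {Y : Ω → ℕ} {k : ℕ}

lemma ind_eq_indicator (Y : Ω → ℕ) (k : ℕ) :
    ind Y k = Set.indicator {ω | Y ω = k} (fun _ => (1:ℝ)) := by
  funext ω; simp [ind, Set.indicator_apply]

lemma meas_level (hY : Measurable Y) (k : ℕ) : MeasurableSet {ω | Y ω = k} :=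
  hY (measurableSet_singleton k)

lemma integrable_ind (hY : Measurable Y) (k : ℕ) : Integrable (ind Y k) P := by
  rw [ind_eq_indicator]
  exact (integrable_const 1).indicator (meas_level hY k)

lemma integral_ind (hY : Measurable Y) (k : ℕ) :
    ∫ ω, ind Y k ω ∂P = (P {ω | Y ω = k}).toReal := by
  rw [ind_eq_indicator, integral_indicator (meas_level hY k)]
  simp
  rfl

lemma eq_const_of_var_zero {f : Ω → ℝ} (hfi : Integrable f P)
    (hffi : Integrable (fun ω => f ω * f ω) P)
    (h : ∫ ω, f ω * f ω ∂P = (∫ ω, f ω ∂P) ^ 2) :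
    f =ᵐ[P] fun _ => ∫ ω, f ω ∂P := by
  set c := ∫ ω, f ω ∂P with hc
  have hexp : (fun ω => (f ω - c) ^ 2) = fun ω => (f ω * f ω - 2 * c * f ω) + c ^ 2 :=
    funext fun ω => by ring
  have hint2 : Integrable (fun ω => (f ω - c) ^ 2) P := by
    rw [hexp]; exact (hffi.sub (hfi.const_mul _)).add (integrable_const _)
  have hval : ∫ ω, (f ω - c) ^ 2 ∂P = 0 := by
    rw [hexp]
    have h1 : Integrable (fun ω => f ω * f ω - 2 * c * f ω) P := hffi.sub (hfi.const_mul _)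
    rw [integral_add h1 (integrable_const _),
      integral_sub hffi (hfi.const_mul _), integral_const_mul, integral_const, h, ← hc]
    simp only [measure_univ, ENNReal.toReal_one, smul_eq_mul, one_mul, probReal_univ]
    ring
  have h0 := (integral_eq_zero_iff_of_nonneg (fun ω => sq_nonneg _) hint2).mp hval
  filter_upwards [h0] with ω hω
  have hω' : (f ω - c) ^ 2 = 0 := hω
  have := pow_eq_zero_iff (n := 2) (by norm_num) |>.mp hω'
  linarith [sub_eq_zero.mp this]

end Aux

/-- Theorem 1, part (M2): `ψ(X,Y) = 0` if and only if `X` and `Y` are independent. -/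
theorem psi_eq_zero_iff_indep {Ω H : Type*} [MeasurableSpace Ω] [MetricSpace H]
    [MeasurableSpace H] [BorelSpace H] [TopologicalSpace.SeparableSpace H]
    (P : Measure Ω) [IsProbabilityMeasure P] (K : ℕ) (hK : 2 ≤ K)
    (X : Ω → H) (Y : Ω → ℕ) (hX : Measurable X) (hY : Measurable Y)
    (hYr : ∀ ω, Y ω ∈ Finset.Icc 1 K)
    (hp : ∀ k ∈ Finset.Icc 1 K, 0 < P {ω | Y ω = k}) :
    psi P X Y K = 0 ↔ IndepFun X Y P := by
  classical
  have hm : MeasurableSpace.comap X inferInstance ≤ ‹MeasurableSpace Ω› := hX.comap_le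
  haveI : SigmaFinite (P.trim hm) := by infer_instance
  set Q : ℕ → Ω → ℝ := condProb P X Y with hQdef
  have hQint : ∀ k, Integrable (Q k) P := fun k => integrable_condExp
  have hQnn : ∀ k, 0 ≤ᵐ[P] Q k := fun k =>
    condExp_nonneg (ae_of_all _ fun ω => by unfold ind; split_ifs <;> norm_num)
  have hQle1 : ∀ k, Q k ≤ᵐ[P] fun _ => (1:ℝ) := by
    intro k
    have h : P[ind Y k | MeasurableSpace.comap X inferInstance] ≤ᵐ[P]
        P[(fun _ => (1:ℝ)) | MeasurableSpace.comap X inferInstance] :=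
      condExp_mono (integrable_ind (P := P) hY k)
        (integrable_const (μ := P) (1:ℝ))
        (ae_of_all _ fun ω => by unfold ind; split_ifs <;> norm_num)
    have h2 : P[(fun _ => (1:ℝ)) | MeasurableSpace.comap X inferInstance] = fun _ => (1:ℝ) :=
      condExp_const (μ := P) hm (1:ℝ)
    rw [h2] at h
    exact h
  have hQQint : ∀ k l, Integrable (fun ω => Q k ω * Q l ω) P := by
    intro k l
    refine Integrable.mono' (integrable_const (1:ℝ))
      ((hQint k).1.mul ((hQint l).1)) ?_
    filter_upwards [hQnn k, hQnn l, hQle1 k, hQle1 l] with ω h1 h2 h3 h4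
    rw [Real.norm_eq_abs, abs_mul, abs_of_nonneg h1, abs_of_nonneg h2]
    exact mul_le_one₀ h3 h2 h4
  have hintQ : ∀ k, ∫ ω, Q k ω ∂P = levelProb P Y k := by
    intro k
    rw [hQdef]
    show ∫ ω, (P[ind Y k | MeasurableSpace.comap X inferInstance]) ω ∂P = _
    rw [integral_condExp hm]
    exact integral_ind hY k
  -- step: constancy of Q implies independence-per-level measure identity
  have hper : ∀ k, (Q k =ᵐ[P] fun _ => levelProb P Y k) →
      ∀ s : Set H, MeasurableSet s →
      P (X ⁻¹' s ∩ {ω | Y ω = k}) = P (X ⁻¹' s) * P {ω | Y ω = k} := by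
    intro k hconst s hs
    have hms : MeasurableSet[MeasurableSpace.comap X inferInstance] (X ⁻¹' s) := ⟨s, hs, rfl⟩
    have h2 : ∫ ω in X ⁻¹' s, Q k ω ∂P = ∫ ω in X ⁻¹' s, ind Y k ω ∂P :=
      setIntegral_condExp hm (integrable_ind (P := P) hY k) hms
    have h1 : ∫ ω in X ⁻¹' s, ind Y k ω ∂P = (P (X ⁻¹' s ∩ {ω | Y ω = k})).toReal := by
      simp only [ind_eq_indicator]
      rw [setIntegral_indicator (meas_level hY k), setIntegral_const]
      simp
      rfl
    have h3 : ∫ ω in X ⁻¹' s, Q k ω ∂P = levelProb P Y k * (P (X ⁻¹' s)).toReal := by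
      rw [integral_congr_ae (ae_restrict_of_ae hconst), setIntegral_const]
      rw [smul_eq_mul, mul_comm]
      rfl
    refine (ENNReal.toReal_eq_toReal_iff' (measure_ne_top P _)
      (ENNReal.mul_ne_top (measure_ne_top P _) (measure_ne_top P _))).mp ?_
    rw [ENNReal.toReal_mul, ← h1, ← h2, h3, levelProb]
    ring
  constructor
  · -- psi = 0 → independence
    intro hpsi
    -- each covariance squared term vanishes; diagonal gives constancy
    have hKne : (1 / ((K:ℝ) - 1)) ≠ 0 := by
      have : (2:ℝ) ≤ (K:ℝ) := by exact_mod_cast hK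
      have : (K:ℝ) - 1 ≠ 0 := by linarith
      simp [this]
    have hsum : ∑ k ∈ Finset.Icc 1 K, ∑ l ∈ Finset.Icc 1 K,
        (cov P (Q k) (Q l)) ^ 2 / (levelProb P Y k * levelProb P Y l) = 0 := by
      have := hpsi
      unfold psi at this
      rcases mul_eq_zero.mp this with h | h
      · exact absurd h hKne
      · exact h
    have hterm : ∀ k ∈ Finset.Icc 1 K, ∀ l ∈ Finset.Icc 1 K,
        (cov P (Q k) (Q l)) ^ 2 / (levelProb P Y k * levelProb P Y l) = 0 := by
      have hnn : ∀ k ∈ Finset.Icc 1 K, ∀ l ∈ Finset.Icc 1 K,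
          0 ≤ (cov P (Q k) (Q l)) ^ 2 / (levelProb P Y k * levelProb P Y l) := by
        intro k _ l _
        exact div_nonneg (sq_nonneg _) (mul_nonneg ENNReal.toReal_nonneg ENNReal.toReal_nonneg)
      intro k hk l hl
      have h1 := (Finset.sum_eq_zero_iff_of_nonneg
        (fun k hk => Finset.sum_nonneg (fun l hl => hnn k hk l hl))).mp hsum k hk
      exact (Finset.sum_eq_zero_iff_of_nonneg (fun l hl => hnn k hk l hl)).mp h1 l hl
    have hlp : ∀ k ∈ Finset.Icc 1 K, 0 < levelProb P Y k := by
      intro k hk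
      exact ENNReal.toReal_pos (hp k hk).ne' (measure_ne_top P _)
    have hcov : ∀ k ∈ Finset.Icc 1 K, cov P (Q k) (Q k) = 0 := by
      intro k hk
      have h := hterm k hk k hk
      have hd : levelProb P Y k * levelProb P Y k ≠ 0 :=
        (mul_pos (hlp k hk) (hlp k hk)).ne'
      have := (div_eq_zero_iff.mp h).resolve_right hd
      exact pow_eq_zero_iff (n := 2) (by norm_num) |>.mp this
    have hconst : ∀ k ∈ Finset.Icc 1 K, Q k =ᵐ[P] fun _ => levelProb P Y k := by
      intro k hk
      have h := hcov k hk
      unfold cov at h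
      have h' : ∫ ω, Q k ω * Q k ω ∂P = (∫ ω, Q k ω ∂P) ^ 2 := by
        rw [sq]; linarith
      have := eq_const_of_var_zero (hQint k) (hQQint k k) h'
      rw [hintQ k] at this
      exact this
    -- now prove independence
    rw [indepFun_iff_measure_inter_preimage_eq_mul]
    intro s t hs ht
    set F := (Finset.Icc 1 K).filter (fun k => k ∈ t) with hF
    have hYt : Y ⁻¹' t = ⋃ k ∈ F, {ω | Y ω = k} := by
      ext ω
      simp only [mem_preimage, Set.mem_iUnion, hF, Finset.mem_filter, mem_setOf_eq,
        exists_prop]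
      constructor
      · intro h; exact ⟨Y ω, ⟨hYr ω, h⟩, rfl⟩
      · rintro ⟨k, ⟨_, hkt⟩, hk⟩; rw [hk]; exact hkt
    have hdisj : (↑F : Set ℕ).Pairwise
        (Function.onFun Disjoint fun k => X ⁻¹' s ∩ {ω | Y ω = k}) := by
      intro k _ l _ hkl
      refine Set.disjoint_left.mpr ?_
      rintro ω ⟨-, h1⟩ ⟨-, h2⟩
      exact hkl (h1 ▸ h2 ▸ rfl)
    have hmeas : ∀ k ∈ F, MeasurableSet (X ⁻¹' s ∩ {ω | Y ω = k}) :=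
      fun k _ => (hX hs).inter (meas_level hY k)
    have hsplit : X ⁻¹' s ∩ Y ⁻¹' t = ⋃ k ∈ F, (X ⁻¹' s ∩ {ω | Y ω = k}) := by
      rw [hYt, Set.inter_iUnion₂]
    have hdisj2 : (↑F : Set ℕ).Pairwise
        (Function.onFun Disjoint fun k => {ω | Y ω = k}) := by
      intro k _ l _ hkl
      refine Set.disjoint_left.mpr ?_
      rintro ω h1 h2
      exact hkl (h1 ▸ h2 ▸ rfl)
    rw [hsplit, measure_biUnion_finset hdisj hmeas, hYt,
      measure_biUnion_finset hdisj2 (fun k _ => meas_level hY k), Finset.mul_sum]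
    refine Finset.sum_congr rfl fun k hk => ?_
    exact hper k (hconst k (Finset.mem_filter.mp hk).1) s hs
  · -- independence → psi = 0
    intro hI
    have hconst : ∀ k, Q k =ᵐ[P] fun _ => levelProb P Y k := by
      intro k
      have hsm : StronglyMeasurable[MeasurableSpace.comap Y inferInstance] (ind Y k) := by
        rw [ind_eq_indicator]
        exact stronglyMeasurable_const.indicator ⟨{k}, measurableSet_singleton k, rfl⟩
      have hindep : Indep (MeasurableSpace.comap Y inferInstance)
          (MeasurableSpace.comap X inferInstance) P :=
        (IndepFun_iff_Indep Y X P).mp hI.symm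
      have h := condExp_indep_eq hY.comap_le hm hsm hindep
      have : ∫ ω, ind Y k ω ∂P = levelProb P Y k := integral_ind hY k
      rw [this] at h
      exact h
    have hcov : ∀ k l, cov P (Q k) (Q l) = 0 := by
      intro k l
      unfold cov
      have h1 : ∫ ω, Q k ω * Q l ω ∂P = levelProb P Y k * levelProb P Y l := by
        rw [integral_congr_ae (f := fun ω => Q k ω * Q l ω) (((hconst k).mul (hconst l)))]
        simp [measure_univ]
      rw [h1, hintQ k, hintQ l, sub_self]
    unfold psi
    rw [Finset.sum_eq_zero, mul_zero]
    intro k _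
    rw [Finset.sum_eq_zero]
    intro l _
    show (cov P (Q k) (Q l)) ^ 2 / _ = 0
    rw [hcov k l]
    simp
end
end

section
/- ψ(X,Y) = 1 if and only if there exists a Borel measurable function h : ℋ → {1,…,K} such that Y = h(X) almost surely. -/
open MeasureTheory ProbabilityTheory Filter Set

noncomputable section

namespace PsiAux
section S1


variable {Ω : Type*} {m0 : MeasurableSpace Ω} {P : Measure Ω} [IsProbabilityMeasure P]
  {m : MeasurableSpace Ω}

lemma aux_int {f : Ω → ℝ} (hf : AEStronglyMeasurable[m0] f P) {C : ℝ}
    (h : ∀ᵐ ω ∂P, |f ω| ≤ C) : Integrable f P :=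
  (integrable_const C).mono' hf (by simpa [Real.norm_eq_abs] using h)

lemma aux_int_mul {f g : Ω → ℝ} (hf : AEStronglyMeasurable[m0] f P)
    (hg : AEStronglyMeasurable[m0] g P) {C D : ℝ} (hfC : ∀ᵐ ω ∂P, |f ω| ≤ C)
    (hgD : ∀ᵐ ω ∂P, |g ω| ≤ D) : Integrable (fun ω => f ω * g ω) P := by
  refine aux_int (C := C*D) (hf.mul hg) ?_
  filter_upwards [hfC, hgD] with ω h1 h2
  calc |f ω * g ω| = |f ω| * |g ω| := abs_mul _ _
    _ ≤ C * D := mul_le_mul h1 h2 (abs_nonneg _) ((abs_nonneg (f ω)).trans h1)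

/-- L² contraction of conditional expectation. -/
lemma aux_condExp_sq_le (hm : m ≤ m0) {g : Ω → ℝ} (hg : AEStronglyMeasurable[m0] g P) {C : ℝ}
    (hC : ∀ ω, |g ω| ≤ C) :
    ∫ ω, (P[g|m]) ω * (P[g|m]) ω ∂P ≤ ∫ ω, g ω * g ω ∂P := by
  have hgi : Integrable g P := aux_int hg (ae_of_all _ hC)
  set Q := P[g|m] with hQ
  have hQm : StronglyMeasurable[m] Q := stronglyMeasurable_condExp
  have hQaesm : AEStronglyMeasurable[m0] Q P := (hQm.mono hm).aestronglyMeasurable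
  have hQC : ∀ᵐ ω ∂P, |Q ω| ≤ C := by
    have h1 : Q ≤ᵐ[P] fun _ => C := by
      have := condExp_mono (μ := P) (m := m) hgi (integrable_const C)
        (ae_of_all _ fun ω => (abs_le.1 (hC ω)).2)
      rwa [condExp_const hm] at this
    have h2 : (fun _ : Ω => -C) ≤ᵐ[P] Q := by
      have := condExp_mono (μ := P) (m := m) (integrable_const (-C)) hgi
        (ae_of_all _ fun ω => (abs_le.1 (hC ω)).1)
      rwa [condExp_const hm] at this
    filter_upwards [h1, h2] with ω hω1 hω2
    exact abs_le.2 ⟨hω2, hω1⟩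
  have hQg : Integrable (fun ω => Q ω * g ω) P :=
    aux_int_mul hQaesm hg hQC (ae_of_all _ hC)
  have hQQ : Integrable (fun ω => Q ω * Q ω) P := aux_int_mul hQaesm hQaesm hQC hQC
  have hgg : Integrable (fun ω => g ω * g ω) P :=
    aux_int_mul hg hg (ae_of_all _ hC) (ae_of_all _ hC)
  have key : ∫ ω, Q ω * g ω ∂P = ∫ ω, Q ω * Q ω ∂P := by
    have hpull : P[Q * g|m] =ᵐ[P] Q * P[g|m] :=
      condExp_mul_of_stronglyMeasurable_left hQm hQg hgi
    calc ∫ ω, Q ω * g ω ∂P = ∫ ω, (P[Q * g|m]) ω ∂P := (integral_condExp hm).symm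
      _ = ∫ ω, (Q ω * Q ω) ∂P := integral_congr_ae hpull
  have hnn : 0 ≤ ∫ ω, (g ω - Q ω) * (g ω - Q ω) ∂P :=
    integral_nonneg fun ω => mul_self_nonneg _
  have hexp : ∫ ω, (g ω - Q ω) * (g ω - Q ω) ∂P
      = ∫ ω, g ω * g ω ∂P - 2 * ∫ ω, Q ω * g ω ∂P + ∫ ω, Q ω * Q ω ∂P := by
    have h0 : (fun ω => (g ω - Q ω) * (g ω - Q ω))
        = fun ω => g ω * g ω - 2 * (Q ω * g ω) + Q ω * Q ω := by
      funext ω; ring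
    rw [h0, integral_add (by exact (hgg.sub (hQg.const_mul 2))) hQQ,
      integral_sub hgg (hQg.const_mul 2), integral_const_mul]
  rw [hexp, key] at hnn
  linarith


end S1
section S2

variable {Ω : Type*} {m0 : MeasurableSpace Ω} {P : Measure Ω} [IsProbabilityMeasure P]
  {m : MeasurableSpace Ω}

variable {Y : Ω → ℕ} {K : ℕ}

lemma ind_abs_le (Y : Ω → ℕ) (k : ℕ) (ω : Ω) : |ind Y k ω| ≤ 1 := by
  simp only [ind]; split <;> simp

lemma ind_nonneg (Y : Ω → ℕ) (k : ℕ) (ω : Ω) : 0 ≤ ind Y k ω := by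
  simp only [ind]; split <;> norm_num

lemma ind_meas (hY : Measurable[m0] Y) (k : ℕ) : Measurable[m0] (ind Y k) :=
  Measurable.ite (hY (measurableSet_singleton k)) measurable_const measurable_const

lemma ind_int (hY : Measurable[m0] Y) (k : ℕ) : Integrable (ind Y k) P :=
  aux_int ((ind_meas hY k).aestronglyMeasurable) (ae_of_all _ (ind_abs_le Y k))

lemma integral_ind (hY : Measurable[m0] Y) (k : ℕ) :
    ∫ ω, ind Y k ω ∂P = (P {ω | Y ω = k}).toReal := by
  have h1 : ind Y k = Set.indicator (Y ⁻¹' {k}) (fun _ => (1:ℝ)) := by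
    funext ω; by_cases h : Y ω = k <;> simp [ind, h, Set.indicator]
  rw [h1, integral_indicator_const (1:ℝ) (hY (measurableSet_singleton k))]
  simp only [smul_eq_mul, mul_one]; rfl

lemma integral_ind_mul (hY : Measurable[m0] Y) (k l : ℕ) :
    ∫ ω, ind Y k ω * ind Y l ω ∂P = if k = l then (P {ω | Y ω = k}).toReal else 0 := by
  by_cases h : k = l
  · subst h
    rw [if_pos rfl, ← integral_ind (P := P) hY k]
    refine integral_congr_ae (ae_of_all _ fun ω => ?_)
    simp only [ind]; split <;> norm_num
  · rw [if_neg h]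
    have h2 : ∀ ω, ind Y k ω * ind Y l ω = 0 := by
      intro ω; simp only [ind]
      split_ifs with h1 h2
      · exact absurd (h1 ▸ h2) h
      · norm_num
      · norm_num
      · norm_num
    simp only [h2, integral_zero]

lemma sum_ind (hYr : ∀ ω, Y ω ∈ Finset.Icc 1 K) (ω : Ω) :
    ∑ k ∈ Finset.Icc 1 K, ind Y k ω = 1 := by
  simp only [ind]
  rw [Finset.sum_ite_eq]
  exact if_pos (hYr ω)

lemma sum_levelProb (hY : Measurable[m0] Y) (hYr : ∀ ω, Y ω ∈ Finset.Icc 1 K) :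
    ∑ k ∈ Finset.Icc 1 K, (P {ω | Y ω = k}).toReal = 1 := by
  have h1 : ∀ k ∈ Finset.Icc 1 K, Integrable (ind Y k) P := fun k _ => ind_int hY k
  calc ∑ k ∈ Finset.Icc 1 K, (P {ω | Y ω = k}).toReal
      = ∑ k ∈ Finset.Icc 1 K, ∫ ω, ind Y k ω ∂P := by
        exact Finset.sum_congr rfl fun k _ => (integral_ind hY k).symm
    _ = ∫ ω, ∑ k ∈ Finset.Icc 1 K, ind Y k ω ∂P := (integral_finset_sum _ h1).symm
    _ = ∫ (_ : Ω), (1:ℝ) ∂P := integral_congr_ae (ae_of_all _ (sum_ind hYr))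
    _ = 1 := by simp

lemma Q_bdd (hm : m ≤ m0) (hY : Measurable[m0] Y) (k : ℕ) :
    ∀ᵐ ω ∂P, 0 ≤ (P[ind Y k|m]) ω ∧ (P[ind Y k|m]) ω ≤ 1 := by
  have h0 : (0:Ω → ℝ) ≤ᵐ[P] P[ind Y k|m] :=
    condExp_nonneg (ae_of_all _ (ind_nonneg Y k))
  have h1 : P[ind Y k|m] ≤ᵐ[P] fun _ => (1:ℝ) := by
    have := condExp_mono (μ := P) (m := m) (ind_int hY k) (integrable_const (1:ℝ) : Integrable _ P)
      (ae_of_all _ fun ω => by simpa using (abs_le.1 (ind_abs_le Y k ω)).2)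
    rwa [condExp_const hm] at this
  filter_upwards [h0, h1] with ω hω0 hω1
  exact ⟨hω0, hω1⟩

lemma integral_Q (hm : m ≤ m0) (hY : Measurable[m0] Y) (k : ℕ) :
    ∫ ω, (P[ind Y k|m]) ω ∂P = (P {ω | Y ω = k}).toReal :=
  (integral_condExp hm).trans (integral_ind hY k)


end S2
section S3

variable {Ω : Type*} {m0 : MeasurableSpace Ω} {P : Measure Ω} [IsProbabilityMeasure P]
  {m : MeasurableSpace Ω}

variable {Y : Ω → ℕ} {K : ℕ}

/-- The conditional expectation of a linear combination of the indicators. -/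
lemma G_eq (hm : m ≤ m0) (hY : Measurable[m0] Y) (w : ℕ → ℝ) :
    P[(fun ω => ∑ l ∈ Finset.Icc 1 K, w l * ind Y l ω)|m]
      =ᵐ[P] fun ω => ∑ l ∈ Finset.Icc 1 K, w l * (P[ind Y l|m]) ω := by
  have hgeq : (fun ω => ∑ l ∈ Finset.Icc 1 K, w l * ind Y l ω)
      = ∑ l ∈ Finset.Icc 1 K, (fun ω => w l * ind Y l ω) := by
    funext ω; simp [Finset.sum_apply]
  have hsum : P[(∑ l ∈ Finset.Icc 1 K, fun ω => w l * ind Y l ω)|m]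
      =ᵐ[P] ∑ l ∈ Finset.Icc 1 K, P[(fun ω => w l * ind Y l ω)|m] :=
    condExp_finset_sum (fun l _ => (ind_int hY l).const_mul (w l)) m
  have hl : ∀ l ∈ Finset.Icc 1 K,
      P[(fun ω => w l * ind Y l ω)|m] =ᵐ[P] fun ω => w l * (P[ind Y l|m]) ω := by
    intro l _
    exact condExp_smul (𝕜 := ℝ) (μ := P) (m := m) (w l) (ind Y l)
  have hall : ∀ᵐ ω ∂P, ∀ l ∈ Finset.Icc 1 K,
      (P[(fun ω => w l * ind Y l ω)|m]) ω = w l * (P[ind Y l|m]) ω :=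
    (eventually_all_finset _).2 hl
  rw [hgeq]
  refine hsum.trans ?_
  filter_upwards [hall] with ω hω
  rw [Finset.sum_apply]
  exact Finset.sum_congr rfl fun l hl' => hω l hl'

/-- projection bound : `‖∑ wₗ Qₗ‖² ≤ ∑ wₗ² pₗ`. -/
lemma proj_bound (hm : m ≤ m0) (hY : Measurable[m0] Y)
    (hYr : ∀ ω, Y ω ∈ Finset.Icc 1 K) (w : ℕ → ℝ) :
    ∫ ω, (∑ l ∈ Finset.Icc 1 K, w l * (P[ind Y l|m]) ω) *
        (∑ l ∈ Finset.Icc 1 K, w l * (P[ind Y l|m]) ω) ∂P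
      ≤ ∑ l ∈ Finset.Icc 1 K, (w l)^2 * (P {ω | Y ω = l}).toReal := by
  have hgY : ∀ ω, (∑ l ∈ Finset.Icc 1 K, w l * ind Y l ω) = w (Y ω) := by
    intro ω
    have h1 : ∀ l ∈ Finset.Icc 1 K, w l * ind Y l ω = if Y ω = l then w l else 0 := by
      intro l _; simp only [ind, mul_ite, mul_one, mul_zero]
    rw [Finset.sum_congr rfl h1, Finset.sum_ite_eq]
    exact if_pos (hYr ω)
  have hgmeas : Measurable[m0] (fun ω => ∑ l ∈ Finset.Icc 1 K, w l * ind Y l ω) :=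
    Finset.measurable_sum _ fun l _ => (ind_meas hY l).const_mul (w l)
  have hgb : ∀ ω, |∑ l ∈ Finset.Icc 1 K, w l * ind Y l ω| ≤ ∑ l ∈ Finset.Icc 1 K, |w l| := by
    intro ω
    calc |∑ l ∈ Finset.Icc 1 K, w l * ind Y l ω|
        ≤ ∑ l ∈ Finset.Icc 1 K, |w l * ind Y l ω| := Finset.abs_sum_le_sum_abs _ _
      _ ≤ ∑ l ∈ Finset.Icc 1 K, |w l| := by
          refine Finset.sum_le_sum fun l _ => ?_
          rw [abs_mul]
          exact mul_le_of_le_one_right (abs_nonneg _) (ind_abs_le Y l ω)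
  have h1 : ∫ ω, (∑ l ∈ Finset.Icc 1 K, w l * (P[ind Y l|m]) ω) *
        (∑ l ∈ Finset.Icc 1 K, w l * (P[ind Y l|m]) ω) ∂P
      = ∫ ω, (P[(fun ω => ∑ l ∈ Finset.Icc 1 K, w l * ind Y l ω)|m]) ω *
        (P[(fun ω => ∑ l ∈ Finset.Icc 1 K, w l * ind Y l ω)|m]) ω ∂P := by
    refine integral_congr_ae ?_
    filter_upwards [G_eq hm hY w] with ω hω
    rw [hω]
  have h2 := aux_condExp_sq_le (P := P) hm hgmeas.aestronglyMeasurable hgb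
  have h3 : ∫ ω, (∑ l ∈ Finset.Icc 1 K, w l * ind Y l ω) *
        (∑ l ∈ Finset.Icc 1 K, w l * ind Y l ω) ∂P
      = ∑ l ∈ Finset.Icc 1 K, (w l)^2 * (P {ω | Y ω = l}).toReal := by
    have hsq : ∀ ω, (∑ l ∈ Finset.Icc 1 K, w l * ind Y l ω) *
        (∑ l ∈ Finset.Icc 1 K, w l * ind Y l ω) = ∑ l ∈ Finset.Icc 1 K, (w l)^2 * ind Y l ω := by
      intro ω
      rw [hgY ω]
      have h4 : ∀ l ∈ Finset.Icc 1 K, (w l)^2 * ind Y l ω = if Y ω = l then (w l)^2 else 0 := by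
        intro l _; simp only [ind, mul_ite, mul_one, mul_zero]
      rw [Finset.sum_congr rfl h4, Finset.sum_ite_eq, if_pos (hYr ω)]
      ring
    rw [integral_congr_ae (ae_of_all _ hsq),
      integral_finset_sum _ (fun l _ => ((ind_int hY l).const_mul _))]
    exact Finset.sum_congr rfl fun l _ => by rw [integral_const_mul, integral_ind hY]
  rw [h1, ← h3]
  exact h2

/-- abstract frame inequality. -/
lemma abstract_frame {ι : Type*} (s : Finset ι) (Q : ι → Ω → ℝ) (p : ι → ℝ)
    (hQaesm : ∀ j, AEStronglyMeasurable[m0] (Q j) P)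
    (hQb : ∀ j, ∀ᵐ ω ∂P, |Q j ω| ≤ 1)
    (hint : ∀ j, ∫ ω, Q j ω ∂P = p j)
    (hp1 : ∀ j, |p j| ≤ 1)
    (hps : ∀ l ∈ s, 0 < p l)
    (hproj : ∀ w : ι → ℝ,
      ∫ ω, (∑ l ∈ s, w l * Q l ω) * (∑ l ∈ s, w l * Q l ω) ∂P ≤ ∑ l ∈ s, (w l)^2 * p l)
    (k : ι) (c w : ι → ℝ)
    (hc : ∀ l, c l = ∫ ω, Q k ω * Q l ω ∂P - p k * p l)
    (hw : ∀ l, w l = c l / p l) :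
    ∑ l ∈ s, (c l)^2 / p l ≤ c k := by
  have hQint : ∀ j, Integrable (Q j) P := fun j => aux_int (hQaesm j) (hQb j)
  have hQQint : ∀ i j, Integrable (fun ω => Q i ω * Q j ω) P := fun i j =>
    aux_int_mul (hQaesm i) (hQaesm j) (hQb i) (hQb j)
  -- centered products
  have hcent : ∀ l, ∫ ω, (Q k ω - p k) * (Q l ω - p l) ∂P = c l := by
    intro l
    have hpt : (fun ω => (Q k ω - p k) * (Q l ω - p l))
        = fun ω => (Q k ω * Q l ω - p k * Q l ω - p l * Q k ω) + p k * p l := by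
      funext ω; ring
    have i2 : Integrable (fun ω => Q k ω * Q l ω - p k * Q l ω) P :=
      (hQQint k l).sub ((hQint l).const_mul (p k))
    have i1 : Integrable (fun ω => Q k ω * Q l ω - p k * Q l ω - p l * Q k ω) P :=
      i2.sub ((hQint k).const_mul (p l))
    rw [hpt, integral_add i1 (integrable_const _),
      integral_sub i2 ((hQint k).const_mul (p l)),
      integral_sub (hQQint k l) ((hQint l).const_mul (p k)),
      integral_const_mul, integral_const_mul, integral_const, hint, hint, hc l]
    simp [measure_univ]
    ring
  set G : Ω → ℝ := fun ω => ∑ l ∈ s, w l * Q l ω with hG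
  set c₀ : ℝ := ∑ l ∈ s, w l * p l with hc₀
  set Cg : ℝ := ∑ l ∈ s, |w l| with hCg
  have hGaesm : AEStronglyMeasurable[m0] G P := by
    refine Finset.aestronglyMeasurable_fun_sum s fun l _ => ?_
    exact (aestronglyMeasurable_const (b := w l)).mul (hQaesm l)
  have hGb : ∀ᵐ ω ∂P, |G ω| ≤ Cg := by
    have hall : ∀ᵐ ω ∂P, ∀ l ∈ s, |Q l ω| ≤ 1 := (eventually_all_finset _).2 fun l _ => hQb l
    filter_upwards [hall] with ω hω
    calc |∑ l ∈ s, w l * Q l ω| ≤ ∑ l ∈ s, |w l * Q l ω| := Finset.abs_sum_le_sum_abs _ _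
      _ ≤ ∑ l ∈ s, |w l| := by
          refine Finset.sum_le_sum fun l hl => ?_
          rw [abs_mul]
          exact mul_le_of_le_one_right (abs_nonneg _) (hω l hl)
  have hGint : Integrable G P := aux_int hGaesm hGb
  have hintG : ∫ ω, G ω ∂P = c₀ := by
    rw [hG, integral_finset_sum s (fun l _ => (hQint l).const_mul (w l))]
    exact Finset.sum_congr rfl fun l _ => by rw [integral_const_mul, hint]
  have hGGint : Integrable (fun ω => G ω * G ω) P := aux_int_mul hGaesm hGaesm hGb hGb
  have hG2 : ∫ ω, G ω * G ω ∂P ≤ ∑ l ∈ s, (c l)^2 / p l := by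
    refine (hproj w).trans_eq (Finset.sum_congr rfl fun l hl => ?_)
    rw [hw l]
    have hne : p l ≠ 0 := ne_of_gt (hps l hl)
    field_simp
  -- the centered G
  have hGtb : ∀ᵐ ω ∂P, |G ω - c₀| ≤ Cg + |c₀| := by
    filter_upwards [hGb] with ω hω
    calc |G ω - c₀| ≤ |G ω| + |c₀| := abs_sub _ _
      _ ≤ Cg + |c₀| := by linarith
  have hGtaesm : AEStronglyMeasurable[m0] (fun ω => G ω - c₀) P :=
    hGaesm.sub aestronglyMeasurable_const
  have hGtGtint : Integrable (fun ω => (G ω - c₀) * (G ω - c₀)) P :=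
    aux_int_mul hGtaesm hGtaesm hGtb hGtb
  have hGt2 : ∫ ω, (G ω - c₀) * (G ω - c₀) ∂P ≤ ∑ l ∈ s, (c l)^2 / p l := by
    have hpt : (fun ω => (G ω - c₀) * (G ω - c₀))
        = fun ω => (G ω * G ω - 2 * c₀ * G ω) + c₀ * c₀ := by funext ω; ring
    have i1 : Integrable (fun ω => G ω * G ω - 2 * c₀ * G ω) P := hGGint.sub (hGint.const_mul _)
    rw [hpt, integral_add i1 (integrable_const _),
      integral_sub hGGint (hGint.const_mul _), integral_const_mul, hintG, integral_const]
    simp only [measure_univ, probReal_univ, ENNReal.toReal_one, smul_eq_mul, one_mul]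
    nlinarith [hG2]
  -- f := Q k - p k
  have hfb : ∀ᵐ ω ∂P, |Q k ω - p k| ≤ 2 := by
    filter_upwards [hQb k] with ω hω
    calc |Q k ω - p k| ≤ |Q k ω| + |p k| := abs_sub _ _
      _ ≤ 2 := by linarith [hp1 k]
  have hfaesm : AEStronglyMeasurable[m0] (fun ω => Q k ω - p k) P :=
    (hQaesm k).sub aestronglyMeasurable_const
  have hffint : Integrable (fun ω => (Q k ω - p k) * (Q k ω - p k)) P :=
    aux_int_mul hfaesm hfaesm hfb hfb
  have hfGtint : Integrable (fun ω => (Q k ω - p k) * (G ω - c₀)) P :=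
    aux_int_mul hfaesm hGtaesm hfb hGtb
  have hfGt : ∫ ω, (Q k ω - p k) * (G ω - c₀) ∂P = ∑ l ∈ s, (c l)^2 / p l := by
    have hGt : ∀ ω, G ω - c₀ = ∑ l ∈ s, w l * (Q l ω - p l) := by
      intro ω
      rw [hG, hc₀]
      simp only [mul_sub]
      rw [Finset.sum_sub_distrib]
    have hpt : (fun ω => (Q k ω - p k) * (G ω - c₀))
        = fun ω => ∑ l ∈ s, w l * ((Q k ω - p k) * (Q l ω - p l)) := by
      funext ω
      rw [hGt ω, Finset.mul_sum]
      exact Finset.sum_congr rfl fun l _ => by ring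
    have hterm : ∀ l ∈ s, Integrable (fun ω => w l * ((Q k ω - p k) * (Q l ω - p l))) P := by
      intro l _
      refine Integrable.const_mul ?_ (w l)
      refine aux_int_mul (D := 2) hfaesm ((hQaesm l).sub aestronglyMeasurable_const) hfb ?_
      filter_upwards [hQb l] with ω hω
      calc |Q l ω - p l| ≤ |Q l ω| + |p l| := abs_sub _ _
        _ ≤ 2 := by linarith [hp1 l]
    rw [hpt, integral_finset_sum s hterm]
    refine Finset.sum_congr rfl fun l hl => ?_
    rw [integral_const_mul, hcent l, hw l]
    have hplne : p l ≠ 0 := ne_of_gt (hps l hl)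
    field_simp
  -- AM-GM
  have hAM : ∫ ω, (Q k ω - p k) * (G ω - c₀) ∂P
      ≤ ∫ ω, ((Q k ω - p k) * (Q k ω - p k) + (G ω - c₀) * (G ω - c₀)) / 2 ∂P := by
    refine integral_mono_ae hfGtint ((hffint.add hGtGtint).div_const 2) (ae_of_all _ fun ω => ?_)
    nlinarith [sq_nonneg ((Q k ω - p k) - (G ω - c₀))]
  rw [hfGt, integral_div, integral_add hffint hGtGtint, hcent k] at hAM
  linarith


end S3
section S4

section NoM
variable {Ω : Type*} {m0 : MeasurableSpace Ω} {P : Measure Ω} [IsProbabilityMeasure P]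

lemma int_indicator_one {A : Set Ω} (hA : MeasurableSet[m0] A) :
    ∫ ω, A.indicator (fun _ => (1:ℝ)) ω ∂P = (P A).toReal := by
  rw [integral_indicator_const (1:ℝ) hA]; simp; rfl

lemma setint_one {A : Set Ω} : ∫ (_ : Ω) in A, (1:ℝ) ∂P = (P A).toReal := by
  rw [setIntegral_const]; simp; rfl

lemma int_indicator_eq_setint {A : Set Ω} {f : Ω → ℝ} (hA : MeasurableSet[m0] A) :
    ∫ ω, A.indicator f ω ∂P = ∫ ω in A, f ω ∂P := integral_indicator hA

lemma setint_congr_on {A : Set Ω} {f g : Ω → ℝ} (hA : MeasurableSet[m0] A)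
    (h : ∀ ω ∈ A, f ω = g ω) : ∫ ω in A, f ω ∂P = ∫ ω in A, g ω ∂P :=
  setIntegral_congr_fun hA h

end NoM

variable {Ω : Type*} {m0 : MeasurableSpace Ω} {P : Measure Ω} [IsProbabilityMeasure P]
  {m : MeasurableSpace Ω}

variable {Y : Ω → ℕ} {K : ℕ}

lemma Q_abs_le (hm : m ≤ m0) (hY : Measurable[m0] Y) (k : ℕ) :
    ∀ᵐ ω ∂P, |(P[ind Y k|m]) ω| ≤ 1 := by
  filter_upwards [Q_bdd hm hY k] with ω hω
  rw [abs_of_nonneg hω.1]; exact hω.2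

lemma Q_aesm (hm : m ≤ m0) (k : ℕ) :
    AEStronglyMeasurable[m0] (P[ind Y k|m]) P :=
  ((stronglyMeasurable_condExp (m := m)).mono hm).aestronglyMeasurable

lemma Q_sq_le (hm : m ≤ m0) (hY : Measurable[m0] Y) (k : ℕ) :
    ∫ ω, (P[ind Y k|m]) ω * (P[ind Y k|m]) ω ∂P ≤ (P {ω | Y ω = k}).toReal := by
  rw [← integral_Q hm hY k]
  refine integral_mono_ae
    (aux_int_mul (Q_aesm hm k) (Q_aesm hm k) (Q_abs_le hm hY k) (Q_abs_le hm hY k))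
    integrable_condExp ?_
  filter_upwards [Q_bdd hm hY k] with ω hω
  nlinarith [hω.1, hω.2]

lemma Q_zero_one (hm : m ≤ m0) (hY : Measurable[m0] Y) (k : ℕ)
    (hqq : ∫ ω, (P[ind Y k|m]) ω * (P[ind Y k|m]) ω ∂P = (P {ω | Y ω = k}).toReal) :
    ∀ᵐ ω ∂P, (P[ind Y k|m]) ω = 0 ∨ (P[ind Y k|m]) ω = 1 := by
  have hint : Integrable (fun ω => (P[ind Y k|m]) ω - (P[ind Y k|m]) ω * (P[ind Y k|m]) ω) P :=
    integrable_condExp.sub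
      (aux_int_mul (Q_aesm hm k) (Q_aesm hm k) (Q_abs_le hm hY k) (Q_abs_le hm hY k))
  have hnn : 0 ≤ᵐ[P] fun ω => (P[ind Y k|m]) ω - (P[ind Y k|m]) ω * (P[ind Y k|m]) ω := by
    filter_upwards [Q_bdd hm hY k] with ω hω
    simp only [Pi.zero_apply]
    nlinarith [hω.1, hω.2]
  have hz : ∫ ω, ((P[ind Y k|m]) ω - (P[ind Y k|m]) ω * (P[ind Y k|m]) ω) ∂P = 0 := by
    rw [integral_sub integrable_condExp
      (aux_int_mul (Q_aesm hm k) (Q_aesm hm k) (Q_abs_le hm hY k) (Q_abs_le hm hY k)),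
      integral_Q hm hY k, hqq, sub_self]
  have := (integral_eq_zero_iff_of_nonneg_ae hnn hint).1 hz
  filter_upwards [this] with ω hω
  have h0 : (P[ind Y k|m]) ω - (P[ind Y k|m]) ω * (P[ind Y k|m]) ω = 0 := hω
  have h1 : (P[ind Y k|m]) ω * (1 - (P[ind Y k|m]) ω) = 0 := by linarith [h0]; 
  rcases mul_eq_zero.1 h1 with h | h
  · exact Or.inl h
  · exact Or.inr (by linarith)

lemma key_indicator (hm : m ≤ m0) (hY : Measurable[m0] Y) (k : ℕ)
    (hsq : ∀ᵐ ω ∂P, (P[ind Y k|m]) ω = 0 ∨ (P[ind Y k|m]) ω = 1) :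
    ∀ᵐ ω ∂P, (Y ω = k ↔ (P[ind Y k|m]) ω = 1) := by
  set A : Set Ω := (P[ind Y k|m]) ⁻¹' {1} with hA
  have hAm : MeasurableSet[m] A :=
    (stronglyMeasurable_condExp (m := m)).measurable (measurableSet_singleton 1)
  have hA0 : MeasurableSet[m0] A := hm _ hAm
  set e : Ω → ℝ := A.indicator (fun _ => (1:ℝ)) with he
  have hQe : (P[ind Y k|m]) =ᵐ[P] e := by
    filter_upwards [hsq] with ω hω
    rcases hω with h | h
    · have hnA : ω ∉ A := by
        simp only [hA, Set.mem_preimage, Set.mem_singleton_iff, h]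
        norm_num
      simp [he, Set.indicator, hnA, h]
    · have hmA : ω ∈ A := by simp [hA, h]
      simp [he, Set.indicator, hmA, h]
  have hePA : ∫ ω, e ω ∂P = (P A).toReal := int_indicator_one hA0
  have hPA : (P A).toReal = (P {ω | Y ω = k}).toReal := by
    rw [← hePA, ← integral_congr_ae hQe, integral_Q hm hY k]
  have heint : Integrable e P := by
    refine aux_int (C := 1) ?_ (ae_of_all _ fun ω => ?_)
    · exact (integrable_condExp (μ := P) (f := ind Y k) (m := m)).aestronglyMeasurable.congr hQe
    · rw [he]; by_cases hω : ω ∈ A <;> simp [Set.indicator, hω]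
  have hIe : ∫ ω, ind Y k ω * e ω ∂P = (P A).toReal := by
    have h1 : (fun ω => ind Y k ω * e ω) = A.indicator (ind Y k) := by
      funext ω; by_cases hω : ω ∈ A <;> simp [he, Set.indicator, hω]
    rw [h1, int_indicator_eq_setint hA0, ← setIntegral_condExp hm (ind_int hY k) hAm]
    have h2 : ∫ ω in A, (P[ind Y k|m]) ω ∂P = ∫ ω in A, e ω ∂P :=
      integral_congr_ae (ae_restrict_of_ae hQe)
    rw [h2]
    have h3 : ∫ ω in A, e ω ∂P = ∫ ω in A, (1:ℝ) ∂P := by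
      refine setint_congr_on hA0 fun ω hω => ?_
      simp [he, Set.indicator, hω]
    rw [h3]
    exact setint_one
  have hexp : ∀ ω, (ind Y k ω - e ω) * (ind Y k ω - e ω)
      = ind Y k ω - 2 * (ind Y k ω * e ω) + e ω := by
    intro ω
    by_cases h1 : Y ω = k <;> by_cases h2 : ω ∈ A <;>
      simp [ind, he, Set.indicator, h1, h2] <;> ring
  have hprodint : Integrable (fun ω => ind Y k ω * e ω) P := by
    refine aux_int_mul (ind_meas hY k).aestronglyMeasurable
      ((integrable_condExp (μ := P) (f := ind Y k) (m := m)).aestronglyMeasurable.congr hQe)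
      (D := 1) (ae_of_all _ (ind_abs_le Y k)) (ae_of_all _ fun ω => ?_)
    rw [he]; by_cases hω : ω ∈ A <;> simp [Set.indicator, hω]
  have hz : ∫ ω, (ind Y k ω - e ω) * (ind Y k ω - e ω) ∂P = 0 := by
    have i1 : Integrable (fun ω => ind Y k ω - 2 * (ind Y k ω * e ω)) P :=
      (ind_int hY k).sub (hprodint.const_mul 2)
    rw [integral_congr_ae (ae_of_all _ hexp), integral_add i1 heint,
      integral_sub (ind_int hY k) (hprodint.const_mul 2), integral_const_mul,
      integral_ind hY k, hIe, hePA, hPA]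
    ring
  have hnn : 0 ≤ᵐ[P] fun ω => (ind Y k ω - e ω) * (ind Y k ω - e ω) :=
    ae_of_all _ fun ω => mul_self_nonneg _
  have hint2 : Integrable (fun ω => (ind Y k ω - e ω) * (ind Y k ω - e ω)) P := by
    rw [show (fun ω => (ind Y k ω - e ω) * (ind Y k ω - e ω))
      = fun ω => ind Y k ω - 2 * (ind Y k ω * e ω) + e ω from funext hexp]
    exact ((ind_int hY k).sub (hprodint.const_mul 2)).add heint
  have hae := (integral_eq_zero_iff_of_nonneg_ae hnn hint2).1 hz
  filter_upwards [hae, hQe] with ω h1 h2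
  have h3 : (ind Y k ω - e ω) * (ind Y k ω - e ω) = 0 := h1
  have h4 : ind Y k ω = e ω := by nlinarith [h3]
  rw [h2]
  constructor
  · intro h5
    rw [← h4]; simp [ind, h5]
  · intro h5
    by_contra h6
    rw [← h4] at h5
    simp [ind, h6] at h5

lemma condExp_eq_ind {Z : Ω → ℕ} (hm : m ≤ m0) (k : ℕ)
    (hsm : StronglyMeasurable[m] (ind Z k)) (hYZ : Y =ᵐ[P] Z) :
    P[ind Y k|m] =ᵐ[P] ind Y k := by
  have h1 : ind Y k =ᵐ[P] ind Z k := by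
    filter_upwards [hYZ] with ω h; simp [ind, h]
  have h2 : Integrable (ind Z k) P :=
    aux_int ((hsm.mono hm).aestronglyMeasurable) (ae_of_all _ (ind_abs_le Z k))
  refine (condExp_congr_ae h1).trans ?_
  rw [condExp_of_stronglyMeasurable hm hsm h2]
  exact h1.symm


end S4
end PsiAux

open PsiAux in
/-- Theorem 1, part (M3): `ψ(X,Y) = 1` if and only if `Y` is a.s. a Borel measurable
function of `X` with values in `{1,…,K}`. -/
theorem psi_eq_one_iff_function {Ω H : Type*} [MeasurableSpace Ω] [MetricSpace H]
    [MeasurableSpace H] [BorelSpace H] [TopologicalSpace.SeparableSpace H]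
    (P : Measure Ω) [IsProbabilityMeasure P] (K : ℕ) (hK : 2 ≤ K)
    (X : Ω → H) (Y : Ω → ℕ) (hX : Measurable X) (hY : Measurable Y)
    (hYr : ∀ ω, Y ω ∈ Finset.Icc 1 K)
    (hp : ∀ k ∈ Finset.Icc 1 K, 0 < P {ω | Y ω = k}) :
    psi P X Y K = 1 ↔
      ∃ h : H → ℕ, Measurable h ∧ (∀ x, h x ∈ Finset.Icc 1 K) ∧
        Y =ᵐ[P] fun ω => h (X ω) := by
  classical
  have hm : MeasurableSpace.comap X inferInstance ≤ ‹MeasurableSpace Ω› := hX.comap_le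
  have hps : ∀ l ∈ Finset.Icc 1 K, 0 < levelProb P Y l := fun l hl =>
    ENNReal.toReal_pos (hp l hl).ne' (measure_ne_top _ _)
  have hK1 : (0:ℝ) < (K:ℝ) - 1 := by
    have h2 : (2:ℝ) ≤ (K:ℝ) := by exact_mod_cast hK
    linarith
  have hKne : ((K:ℝ) - 1) ≠ 0 := ne_of_gt hK1
  have hsumP : ∑ k ∈ Finset.Icc 1 K, levelProb P Y k = 1 := sum_levelProb hY hYr
  have hsum1 : ∑ k ∈ Finset.Icc 1 K, (1 - levelProb P Y k) = (K:ℝ) - 1 := by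
    rw [Finset.sum_sub_distrib, hsumP, Finset.sum_const, Nat.card_Icc]
    simp
  have hintQ : ∀ j, ∫ ω, condProb P X Y j ω ∂P = levelProb P Y j := fun j =>
    integral_Q hm hY j
  constructor
  · -- forward direction
    intro hpsi
    have hp1 : ∀ j, |levelProb P Y j| ≤ 1 := by
      intro j
      show |(P {ω | Y ω = j}).toReal| ≤ 1
      rw [abs_of_nonneg ENNReal.toReal_nonneg]
      calc (P {ω | Y ω = j}).toReal ≤ (1 : ENNReal).toReal :=
            ENNReal.toReal_mono ENNReal.one_ne_top prob_le_one
        _ = 1 := by simp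
    have hQb : ∀ j, ∀ᵐ ω ∂P, |condProb P X Y j ω| ≤ 1 := fun j => Q_abs_le hm hY j
    have hQaesm : ∀ j, AEStronglyMeasurable (condProb P X Y j) P := fun j => Q_aesm hm j
    have hcov : ∀ k l, cov P (condProb P X Y k) (condProb P X Y l)
        = ∫ ω, condProb P X Y k ω * condProb P X Y l ω ∂P
          - levelProb P Y k * levelProb P Y l := by
      intro k l
      rw [cov, hintQ k, hintQ l]
    have hframe : ∀ k, ∑ l ∈ Finset.Icc 1 K,
        (cov P (condProb P X Y k) (condProb P X Y l))^2 / levelProb P Y l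
        ≤ cov P (condProb P X Y k) (condProb P X Y k) := by
      intro k
      exact abstract_frame (Finset.Icc 1 K) (condProb P X Y) (levelProb P Y)
        hQaesm hQb hintQ hp1 hps (fun w => proj_bound hm hY hYr w) k _ _
        (fun l => hcov k l) (fun l => rfl)
    have hckk : ∀ k, cov P (condProb P X Y k) (condProb P X Y k)
        ≤ levelProb P Y k * (1 - levelProb P Y k) := by
      intro k
      have h2 : ∫ ω, condProb P X Y k ω * condProb P X Y k ω ∂P ≤ levelProb P Y k :=
        Q_sq_le hm hY k
      rw [hcov k k]
      nlinarith [h2]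
    have hS : ∑ k ∈ Finset.Icc 1 K, ∑ l ∈ Finset.Icc 1 K,
        (cov P (condProb P X Y k) (condProb P X Y l)) ^ 2
          / (levelProb P Y k * levelProb P Y l) = (K:ℝ) - 1 := by
      unfold psi at hpsi
      field_simp at hpsi
      linarith [hpsi]
    have hre : ∀ k, ∑ l ∈ Finset.Icc 1 K,
        (cov P (condProb P X Y k) (condProb P X Y l)) ^ 2
          / (levelProb P Y k * levelProb P Y l)
        = (∑ l ∈ Finset.Icc 1 K,
            (cov P (condProb P X Y k) (condProb P X Y l)) ^ 2 / levelProb P Y l)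
          / levelProb P Y k := by
      intro k
      rw [Finset.sum_div]
      refine Finset.sum_congr rfl fun l _ => ?_
      rw [div_div, mul_comm]
    have hterm : ∀ k ∈ Finset.Icc 1 K, ∑ l ∈ Finset.Icc 1 K,
        (cov P (condProb P X Y k) (condProb P X Y l)) ^ 2
          / (levelProb P Y k * levelProb P Y l) ≤ 1 - levelProb P Y k := by
      intro k hk
      have hpk := hps k hk
      rw [hre k, div_le_iff₀ hpk]
      calc (∑ l ∈ Finset.Icc 1 K,
            (cov P (condProb P X Y k) (condProb P X Y l)) ^ 2 / levelProb P Y l)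
          ≤ cov P (condProb P X Y k) (condProb P X Y k) := hframe k
        _ ≤ levelProb P Y k * (1 - levelProb P Y k) := hckk k
        _ = (1 - levelProb P Y k) * levelProb P Y k := mul_comm _ _
    have heq : ∀ k ∈ Finset.Icc 1 K, ∑ l ∈ Finset.Icc 1 K,
        (cov P (condProb P X Y k) (condProb P X Y l)) ^ 2
          / (levelProb P Y k * levelProb P Y l) = 1 - levelProb P Y k :=
      (Finset.sum_eq_sum_iff_of_le hterm).1 (by rw [hS, hsum1])
    have hQQ : ∀ k ∈ Finset.Icc 1 K,
        ∫ ω, condProb P X Y k ω * condProb P X Y k ω ∂P = levelProb P Y k := by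
      intro k hk
      have hpk := hps k hk
      have h1 := heq k hk
      rw [hre k] at h1
      have h2 : ∑ l ∈ Finset.Icc 1 K,
          (cov P (condProb P X Y k) (condProb P X Y l)) ^ 2 / levelProb P Y l
          = levelProb P Y k * (1 - levelProb P Y k) := by
        rw [div_eq_iff (ne_of_gt hpk)] at h1
        rw [h1]; ring
      have h3 := hframe k
      have h4 := hckk k
      have h5 : cov P (condProb P X Y k) (condProb P X Y k)
          = levelProb P Y k * (1 - levelProb P Y k) := by linarith
      rw [hcov k k] at h5
      nlinarith [h5]
    have hsq : ∀ k, k ∈ Finset.Icc 1 K →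
        ∀ᵐ ω ∂P, (Y ω = k ↔ condProb P X Y k ω = 1) := fun k hk =>
      key_indicator hm hY k (Q_zero_one hm hY k (hQQ k hk))
    have hB : ∀ k, ∃ B : Set H, MeasurableSet B ∧
        X ⁻¹' B = condProb P X Y k ⁻¹' {1} := by
      intro k
      have hAm : MeasurableSet[MeasurableSpace.comap X inferInstance]
          (condProb P X Y k ⁻¹' {1}) :=
        (stronglyMeasurable_condExp
          (m := MeasurableSpace.comap X inferInstance)).measurable
          (measurableSet_singleton 1)
      rwa [MeasurableSpace.measurableSet_comap] at hAm
    choose B hBmeas hBpre using hB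
    have hkey : ∀ᵐ ω ∂P, ∀ k ∈ Finset.Icc 1 K, (Y ω = k ↔ X ω ∈ B k) := by
      rw [eventually_all_finset]
      intro k hk
      filter_upwards [hsq k hk] with ω hω
      have h3 : (ω ∈ X ⁻¹' B k) ↔ condProb P X Y k ω = 1 := by
        rw [hBpre k]; exact Iff.rfl
      exact hω.trans h3.symm
    refine ⟨fun x => if (∑ k ∈ Finset.Icc 1 K, if x ∈ B k then k else 0) ∈ Finset.Icc 1 K
      then (∑ k ∈ Finset.Icc 1 K, if x ∈ B k then k else 0) else 1, ?_, ?_, ?_⟩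
    · have hn : Measurable (fun x => ∑ k ∈ Finset.Icc 1 K, if x ∈ B k then k else 0) :=
        Finset.measurable_sum _ fun k _ =>
          Measurable.ite (hBmeas k) measurable_const measurable_const
      exact Measurable.ite (hn (MeasurableSet.of_discrete
        (s := {n : ℕ | n ∈ Finset.Icc 1 K}))) hn measurable_const
    · intro x
      by_cases hx : (∑ k ∈ Finset.Icc 1 K, if x ∈ B k then k else 0) ∈ Finset.Icc 1 K
      · simpa [hx] using hx
      · simp only [hx, if_neg, if_false, Finset.mem_Icc]
        omega
    · filter_upwards [hkey] with ω hω
      have hn : (∑ k ∈ Finset.Icc 1 K, if X ω ∈ B k then k else 0) = Y ω := by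
        have h1 : ∀ k ∈ Finset.Icc 1 K,
            (if X ω ∈ B k then k else 0) = if Y ω = k then k else 0 := by
          intro k hk
          by_cases h2 : Y ω = k
          · rw [if_pos ((hω k hk).1 h2), if_pos h2]
          · rw [if_neg (fun hc => h2 ((hω k hk).2 hc)), if_neg h2]
        rw [Finset.sum_congr rfl h1, Finset.sum_ite_eq, if_pos (hYr ω)]
      show Y ω = _
      simp only [hn, if_pos (hYr ω)]
  · -- backward direction
    rintro ⟨h, hhm, hhr, hYae⟩
    have hsm : ∀ k, StronglyMeasurable[MeasurableSpace.comap X inferInstance]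
        (ind (fun ω => h (X ω)) k) := by
      intro k
      have hXm : Measurable[MeasurableSpace.comap X inferInstance] X :=
        Measurable.of_comap_le le_rfl
      have hphi : Measurable (fun x : H => if h x = k then (1:ℝ) else 0) :=
        Measurable.ite (hhm (measurableSet_singleton k)) measurable_const measurable_const
      exact (hphi.comp hXm).stronglyMeasurable
    have hQind : ∀ k, condProb P X Y k =ᵐ[P] ind Y k := fun k =>
      condExp_eq_ind hm k (hsm k) hYae
    have hcov : ∀ k l, cov P (condProb P X Y k) (condProb P X Y l)
        = (if k = l then levelProb P Y k else 0)
          - levelProb P Y k * levelProb P Y l := by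
      intro k l
      rw [cov]
      have h1 : ∫ ω, condProb P X Y k ω * condProb P X Y l ω ∂P
          = ∫ ω, ind Y k ω * ind Y l ω ∂P := by
        refine integral_congr_ae ?_
        filter_upwards [hQind k, hQind l] with ω h2 h3
        rw [h2, h3]
      have h6 : ∫ ω, ind Y k ω * ind Y l ω ∂P
          = if k = l then levelProb P Y k else 0 := integral_ind_mul hY k l
      rw [hintQ k, hintQ l, h1, h6]
    have hinner : ∀ k ∈ Finset.Icc 1 K, ∑ l ∈ Finset.Icc 1 K,
        (cov P (condProb P X Y k) (condProb P X Y l)) ^ 2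
          / (levelProb P Y k * levelProb P Y l) = 1 - levelProb P Y k := by
      intro k hk
      have hpk := hps k hk
      have hterm : ∀ l ∈ Finset.Icc 1 K,
          (cov P (condProb P X Y k) (condProb P X Y l)) ^ 2
            / (levelProb P Y k * levelProb P Y l)
          = if k = l then (1 - levelProb P Y k)^2
            else levelProb P Y k * levelProb P Y l := by
        intro l hl
        have hpl := hps l hl
        rw [hcov k l]
        by_cases h2 : k = l
        · subst h2
          rw [if_pos rfl, if_pos rfl]
          field_simp
        · rw [if_neg h2, if_neg h2]
          field_simp
          ring
      rw [Finset.sum_congr rfl hterm, ← Finset.add_sum_erase _ _ hk, if_pos rfl]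
      have h6 : ∑ l ∈ (Finset.Icc 1 K).erase k,
          (if k = l then (1 - levelProb P Y k)^2
            else levelProb P Y k * levelProb P Y l)
          = ∑ l ∈ (Finset.Icc 1 K).erase k, levelProb P Y k * levelProb P Y l := by
        refine Finset.sum_congr rfl fun l hl => ?_
        exact if_neg fun hc => (Finset.mem_erase.1 hl).1 hc.symm
      have h8 : ∑ l ∈ (Finset.Icc 1 K).erase k, levelProb P Y l
          = 1 - levelProb P Y k := by
        have h9 := Finset.add_sum_erase (Finset.Icc 1 K) (levelProb P Y) hk
        rw [hsumP] at h9
        linarith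
      rw [h6, ← Finset.mul_sum, h8]
      ring
    have htot : ∑ k ∈ Finset.Icc 1 K, ∑ l ∈ Finset.Icc 1 K,
        (cov P (condProb P X Y k) (condProb P X Y l)) ^ 2
          / (levelProb P Y k * levelProb P Y l) = (K:ℝ) - 1 := by
      rw [Finset.sum_congr rfl hinner, hsum1]
    unfold psi
    rw [htot]
    field_simp
end
end

section
/- The information gain inequality holds: ψ(X,Y) ≤ ψ((X,Z),Y). -/
open MeasureTheory ProbabilityTheory Filter Set

noncomputable section

section Helpers

variable {Ω : Type*} [MeasurableSpace Ω] {P : Measure Ω}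

lemma aux_integrable_mul_of_ae_bdd [IsFiniteMeasure P] {f g : Ω → ℝ} {C D : ℝ}
    (hf : AEStronglyMeasurable f P) (hg : AEStronglyMeasurable g P)
    (hfC : ∀ᵐ ω ∂P, |f ω| ≤ C) (hgD : ∀ᵐ ω ∂P, |g ω| ≤ D) :
    Integrable (fun ω => f ω * g ω) P := by
  refine Integrable.mono' (integrable_const (C * D)) (hf.mul hg) ?_
  filter_upwards [hfC, hgD] with ω h1 h2
  rw [Real.norm_eq_abs, abs_mul]
  exact mul_le_mul h1 h2 (abs_nonneg _) ((abs_nonneg _).trans h1)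

lemma aux_integral_center [IsProbabilityMeasure P] {f g : Ω → ℝ}
    (hf : Integrable f P) (hg : Integrable g P)
    (hfg : Integrable (fun ω => f ω * g ω) P) (a b : ℝ)
    (ha : ∫ ω, f ω ∂P = a) (hb : ∫ ω, g ω ∂P = b) :
    ∫ ω, (f ω - a) * (g ω - b) ∂P = ∫ ω, f ω * g ω ∂P - a * b := by
  have h1 : (fun ω => (f ω - a) * (g ω - b))
      = fun ω => (f ω * g ω - (a * g ω + b * f ω)) + a * b := by
    funext ω; ring
  have i1 : Integrable (fun ω => a * g ω + b * f ω) P := (hg.const_mul a).add (hf.const_mul b)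
  have i2 : Integrable (fun ω => f ω * g ω - (a * g ω + b * f ω)) P := hfg.sub i1
  rw [h1, integral_add i2 (integrable_const _), integral_sub hfg i1,
    integral_add (hg.const_mul a) (hf.const_mul b), integral_const_mul, integral_const_mul,
    integral_const, ha, hb]
  simp [measure_univ]
  ring

lemma aux_gram_inner_nonneg [IsProbabilityMeasure P] (s : Finset ℕ) (u v : ℕ → Ω → ℝ)
    (hu : ∀ k ∈ s, ∀ l ∈ s, Integrable (fun ω => u k ω * u l ω) P)
    (hv : ∀ k ∈ s, ∀ l ∈ s, Integrable (fun ω => v k ω * v l ω) P) :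
    0 ≤ ∑ k ∈ s, ∑ l ∈ s,
      (∫ ω, u k ω * u l ω ∂P) * (∫ ω, v k ω * v l ω ∂P) := by
  have key : ∀ k ∈ s, ∀ l ∈ s, (∫ ω, u k ω * u l ω ∂P) * (∫ ω, v k ω * v l ω ∂P)
      = ∫ z, (u k z.1 * v k z.2) * (u l z.1 * v l z.2) ∂(P.prod P) := by
    intro k _ l _
    rw [← integral_prod_mul (fun ω => u k ω * u l ω) (fun ω => v k ω * v l ω)]
    congr 1; funext z; ring
  have hint : ∀ p ∈ s ×ˢ s, Integrable
      (fun z : Ω × Ω => (u p.1 z.1 * v p.1 z.2) * (u p.2 z.1 * v p.2 z.2)) (P.prod P) := by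
    rintro ⟨k, l⟩ hp
    rw [Finset.mem_product] at hp
    have := (hu k hp.1 l hp.2).mul_prod (hv k hp.1 l hp.2)
    refine this.congr (Filter.Eventually.of_forall fun z => ?_)
    ring
  calc (0:ℝ) ≤ ∫ z, (∑ k ∈ s, u k z.1 * v k z.2)^2 ∂(P.prod P) :=
        integral_nonneg fun z => sq_nonneg _
    _ = ∑ p ∈ s ×ˢ s, ∫ z, (u p.1 z.1 * v p.1 z.2) * (u p.2 z.1 * v p.2 z.2) ∂(P.prod P) := by
        rw [← integral_finset_sum _ hint]
        congr 1; funext z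
        rw [sq, Finset.sum_mul_sum, ← Finset.sum_product']
    _ = ∑ k ∈ s, ∑ l ∈ s, (∫ ω, u k ω * u l ω ∂P) * (∫ ω, v k ω * v l ω ∂P) := by
        rw [Finset.sum_product]
        exact Finset.sum_congr rfl fun k hk => Finset.sum_congr rfl fun l hl =>
          (key k hk l hl).symm

end Helpers

section CondexpFacts

variable {Ω : Type*} {m : MeasurableSpace Ω} [m0 : MeasurableSpace Ω] {P : Measure Ω}

lemma aux_ind_eq {Y : Ω → ℕ} (k : ℕ) :
    ind Y k = Set.indicator {ω | Y ω = k} (fun _ => (1:ℝ)) := by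
  funext ω; by_cases h : Y ω = k <;> simp [ind, h, Set.indicator]

lemma aux_ind_meas {Y : Ω → ℕ} (hY : Measurable Y) (k : ℕ) :
    MeasurableSet {ω | Y ω = k} := hY (measurableSet_singleton k)

lemma aux_ind_int [IsFiniteMeasure P] {Y : Ω → ℕ} (hY : Measurable Y) (k : ℕ) :
    Integrable (ind Y k) P := by
  rw [aux_ind_eq]
  exact (integrable_const 1).indicator (aux_ind_meas hY k)

lemma aux_ind_integral [IsProbabilityMeasure P] {Y : Ω → ℕ} (hY : Measurable Y) (k : ℕ) :
    ∫ ω, ind Y k ω ∂P = levelProb P Y k := by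
  rw [show (fun ω => ind Y k ω) = ind Y k from rfl, aux_ind_eq,
    integral_indicator_const (1:ℝ) (aux_ind_meas hY k)]
  simp [levelProb]
  rfl

lemma aux_condexp_bdd [IsProbabilityMeasure P] {Y : Ω → ℕ} (hY : Measurable Y)
    (hm : m ≤ m0) (k : ℕ) :
    ∀ᵐ ω ∂P, |(P[ind Y k | m]) ω| ≤ 1 := by
  have h0 : (0 : Ω → ℝ) ≤ᵐ[P] P[ind Y k | m] :=
    condExp_nonneg (Eventually.of_forall fun ω => by
      simp only [ind, Pi.zero_apply]; split <;> norm_num)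
  have h1 : P[ind Y k | m] ≤ᵐ[P] P[(fun _ => (1:ℝ)) | m] :=
    condExp_mono (aux_ind_int hY k) (integrable_const 1)
      (Eventually.of_forall fun ω => by
        simp only [ind]; split <;> norm_num)
  rw [condExp_const hm] at h1
  filter_upwards [h0, h1] with ω hω0 hω1
  rw [abs_le]
  refine ⟨?_, hω1⟩
  simp only [Pi.zero_apply] at hω0
  linarith

lemma aux_condexp_integral [IsProbabilityMeasure P] {Y : Ω → ℕ} (hY : Measurable Y)
    (hm : m ≤ m0) (k : ℕ) :
    ∫ ω, (P[ind Y k | m]) ω ∂P = levelProb P Y k := by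
  rw [integral_condExp hm, aux_ind_integral hY k]

end CondexpFacts

/-- Theorem 4, part (M4) (information gain inequality): `ψ(X,Y) ≤ ψ((X,Z),Y)`. -/
theorem psi_information_gain {Ω H H' : Type*} [MeasurableSpace Ω] [MetricSpace H]
    [MeasurableSpace H] [BorelSpace H] [TopologicalSpace.SeparableSpace H]
    [MetricSpace H'] [MeasurableSpace H'] [BorelSpace H'] [TopologicalSpace.SeparableSpace H']
    (P : Measure Ω) [IsProbabilityMeasure P] (K : ℕ) (hK : 2 ≤ K)
    (X : Ω → H) (Z : Ω → H') (Y : Ω → ℕ)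
    (hX : Measurable X) (hZ : Measurable Z) (hY : Measurable Y)
    (hYr : ∀ ω, Y ω ∈ Finset.Icc 1 K)
    (hp : ∀ k ∈ Finset.Icc 1 K, 0 < P {ω | Y ω = k}) :
    psi P X Y K ≤ psi P (fun ω => (X ω, Z ω)) Y K := by
  classical
  have hm1 : MeasurableSpace.comap X inferInstance ≤ (inferInstance : MeasurableSpace Ω) :=
    hX.comap_le
  have hm2 : MeasurableSpace.comap (fun ω => (X ω, Z ω)) inferInstance
      ≤ (inferInstance : MeasurableSpace Ω) := (hX.prodMk hZ).comap_le
  have h12 : MeasurableSpace.comap X inferInstance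
      ≤ MeasurableSpace.comap (fun ω => (X ω, Z ω)) inferInstance := by
    have h := MeasurableSpace.comap_mono
      (g := fun ω => (X ω, Z ω))
      ((measurable_fst : Measurable (Prod.fst : H × H' → H)).comap_le)
    rw [MeasurableSpace.comap_comp] at h
    exact h
  set s : Finset ℕ := Finset.Icc 1 K with hs
  set p : ℕ → ℝ := fun k => levelProb P Y k with hpdef
  set q : ℕ → Ω → ℝ := fun k => condProb P X Y k with hqdef
  set Q : ℕ → Ω → ℝ := fun k => condProb P (fun ω => (X ω, Z ω)) Y k with hQdef
  -- basic facts
  have hp_nonneg : ∀ k, 0 ≤ p k := fun k => ENNReal.toReal_nonneg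
  have hq_int : ∀ k, Integrable (q k) P := fun k => integrable_condExp
  have hQ_int : ∀ k, Integrable (Q k) P := fun k => integrable_condExp
  have hq_meas : ∀ k, AEStronglyMeasurable (q k) P := fun k =>
    (stronglyMeasurable_condExp.mono hm1).aestronglyMeasurable
  have hQ_meas : ∀ k, AEStronglyMeasurable (Q k) P := fun k =>
    (stronglyMeasurable_condExp.mono hm2).aestronglyMeasurable
  have hq_bdd : ∀ k, ∀ᵐ ω ∂P, |q k ω| ≤ 1 := fun k => aux_condexp_bdd hY hm1 k
  have hQ_bdd : ∀ k, ∀ᵐ ω ∂P, |Q k ω| ≤ 1 := fun k => aux_condexp_bdd hY hm2 k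
  have hq_integral : ∀ k, ∫ ω, q k ω ∂P = p k := fun k => aux_condexp_integral hY hm1 k
  have hQ_integral : ∀ k, ∫ ω, Q k ω ∂P = p k := fun k => aux_condexp_integral hY hm2 k
  -- products integrable
  have iqq : ∀ k l, Integrable (fun ω => q k ω * q l ω) P := fun k l =>
    aux_integrable_mul_of_ae_bdd (hq_meas k) (hq_meas l) (hq_bdd k) (hq_bdd l)
  have iQQ : ∀ k l, Integrable (fun ω => Q k ω * Q l ω) P := fun k l =>
    aux_integrable_mul_of_ae_bdd (hQ_meas k) (hQ_meas l) (hQ_bdd k) (hQ_bdd l)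
  have iqQ : ∀ k l, Integrable (fun ω => q k ω * Q l ω) P := fun k l =>
    aux_integrable_mul_of_ae_bdd (hq_meas k) (hQ_meas l) (hq_bdd k) (hQ_bdd l)
  -- tower property
  have htower : ∀ k, P[Q k | MeasurableSpace.comap X inferInstance] =ᵐ[P] q k := fun k =>
    condExp_condExp_of_le h12 hm2
  -- orthogonality
  have horth : ∀ k l, ∫ ω, q l ω * Q k ω ∂P = ∫ ω, q l ω * q k ω ∂P := by
    intro k l
    have hsm : StronglyMeasurable[MeasurableSpace.comap X inferInstance] (q l) :=
      stronglyMeasurable_condExp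
    have hpull : P[(fun ω => q l ω * Q k ω) | MeasurableSpace.comap X inferInstance]
        =ᵐ[P] fun ω => q l ω * (P[Q k | MeasurableSpace.comap X inferInstance]) ω :=
      condExp_mul_of_stronglyMeasurable_left hsm (iqQ l k) (hQ_int k)
    calc ∫ ω, q l ω * Q k ω ∂P
        = ∫ ω, (P[(fun ω => q l ω * Q k ω) | MeasurableSpace.comap X inferInstance]) ω ∂P :=
          (integral_condExp hm1).symm
      _ = ∫ ω, q l ω * q k ω ∂P := by
          refine integral_congr_ae (hpull.trans ?_)
          filter_upwards [htower k] with ω hω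
          rw [hω]
  -- covariance formulas
  have hcovq : ∀ k l, cov P (q k) (q l) = ∫ ω, (q k ω - p k) * (q l ω - p l) ∂P := by
    intro k l
    rw [cov, hq_integral k, hq_integral l,
      aux_integral_center (hq_int k) (hq_int l) (iqq k l) (p k) (p l)
        (hq_integral k) (hq_integral l)]
  -- decomposition
  have hdecomp : ∀ k l, cov P (Q k) (Q l)
      = cov P (q k) (q l) + ∫ ω, (Q k ω - q k ω) * (Q l ω - q l ω) ∂P := by
    intro k l
    have hfun : (fun ω => (Q k ω - q k ω) * (Q l ω - q l ω))
        = fun ω => (Q k ω * Q l ω - q k ω * Q l ω) - (q l ω * Q k ω - q k ω * q l ω) := by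
      funext ω; ring
    have hQl : (fun ω => Q k ω * Q l ω) = fun ω => Q l ω * Q k ω := by funext ω; ring
    have iA : Integrable (fun ω => Q k ω * Q l ω - q k ω * Q l ω) P := (iQQ k l).sub (iqQ k l)
    have iB : Integrable (fun ω => q l ω * Q k ω - q k ω * q l ω) P := (iqQ l k).sub (iqq k l)
    have e1 : ∫ ω, (Q k ω - q k ω) * (Q l ω - q l ω) ∂P
        = ∫ ω, Q k ω * Q l ω ∂P - ∫ ω, q k ω * Q l ω ∂P
          - (∫ ω, q l ω * Q k ω ∂P - ∫ ω, q k ω * q l ω ∂P) := by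
      rw [hfun, integral_sub iA iB, integral_sub (iQQ k l) (iqQ k l),
        integral_sub (iqQ l k) (iqq k l)]
    have e2 : ∫ ω, q k ω * Q l ω ∂P = ∫ ω, q k ω * q l ω ∂P := horth l k
    have e3 : ∫ ω, q l ω * Q k ω ∂P = ∫ ω, q l ω * q k ω ∂P := horth k l
    have e4 : ∫ ω, q l ω * q k ω ∂P = ∫ ω, q k ω * q l ω ∂P := by
      congr 1; funext ω; ring
    rw [cov, cov, hq_integral, hq_integral, hQ_integral, hQ_integral, e1, e2, e3, e4]
    ring
  -- the u's and v's
  set u : ℕ → Ω → ℝ := fun k ω => (q k ω - p k) * (p k)⁻¹ with hudef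
  set v : ℕ → Ω → ℝ := fun k ω => Q k ω - q k ω with hvdef
  have hu_meas : ∀ k, AEStronglyMeasurable (u k) P := fun k =>
    ((hq_meas k).sub aestronglyMeasurable_const).mul_const _
  have hv_meas : ∀ k, AEStronglyMeasurable (v k) P := fun k => (hQ_meas k).sub (hq_meas k)
  have hu_bdd : ∀ k, ∀ᵐ ω ∂P, |u k ω| ≤ (1 + |p k|) * |(p k)⁻¹| := by
    intro k
    filter_upwards [hq_bdd k] with ω hω
    rw [hudef]
    simp only
    rw [abs_mul]
    refine mul_le_mul_of_nonneg_right ?_ (abs_nonneg _)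
    exact (abs_sub _ _).trans (by linarith)
  have hv_bdd : ∀ k, ∀ᵐ ω ∂P, |v k ω| ≤ 2 := by
    intro k
    filter_upwards [hq_bdd k, hQ_bdd k] with ω h1 h2
    rw [hvdef]
    simp only
    calc |Q k ω - q k ω| ≤ |Q k ω| + |q k ω| := abs_sub _ _
      _ ≤ 2 := by linarith
  have iuu : ∀ k ∈ s, ∀ l ∈ s, Integrable (fun ω => u k ω * u l ω) P := fun k _ l _ =>
    aux_integrable_mul_of_ae_bdd (hu_meas k) (hu_meas l) (hu_bdd k) (hu_bdd l)
  have ivv : ∀ k ∈ s, ∀ l ∈ s, Integrable (fun ω => v k ω * v l ω) P := fun k _ l _ =>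
    aux_integrable_mul_of_ae_bdd (hv_meas k) (hv_meas l) (hv_bdd k) (hv_bdd l)
  have huu : ∀ k l, ∫ ω, u k ω * u l ω ∂P = cov P (q k) (q l) * (p k * p l)⁻¹ := by
    intro k l
    have hfun : (fun ω => u k ω * u l ω)
        = fun ω => ((q k ω - p k) * (q l ω - p l)) * (p k * p l)⁻¹ := by
      funext ω
      rw [hudef, mul_inv]
      ring
    rw [hfun, integral_mul_const, ← hcovq k l]
  -- the main inequality on the double sums
  have main : ∑ k ∈ s, ∑ l ∈ s, (cov P (q k) (q l))^2 / (p k * p l)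
      ≤ ∑ k ∈ s, ∑ l ∈ s, (cov P (Q k) (Q l))^2 / (p k * p l) := by
    rw [← sub_nonneg, ← Finset.sum_sub_distrib]
    simp_rw [← Finset.sum_sub_distrib]
    have hterm : ∀ k ∈ s, ∀ l ∈ s,
        (cov P (Q k) (Q l))^2 / (p k * p l) - (cov P (q k) (q l))^2 / (p k * p l)
        = (∫ ω, v k ω * v l ω ∂P)^2 / (p k * p l)
          + 2 * ((∫ ω, u k ω * u l ω ∂P) * (∫ ω, v k ω * v l ω ∂P)) := by
      intro k _ l _
      have hDD : ∫ ω, (Q k ω - q k ω) * (Q l ω - q l ω) ∂P = ∫ ω, v k ω * v l ω ∂P := rfl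
      rw [hdecomp k l, hDD, huu k l]
      ring
    have hsum_eq : ∑ k ∈ s, ∑ l ∈ s,
        ((cov P (Q k) (Q l))^2 / (p k * p l) - (cov P (q k) (q l))^2 / (p k * p l))
        = (∑ k ∈ s, ∑ l ∈ s, (∫ ω, v k ω * v l ω ∂P)^2 / (p k * p l))
          + 2 * ∑ k ∈ s, ∑ l ∈ s,
            (∫ ω, u k ω * u l ω ∂P) * (∫ ω, v k ω * v l ω ∂P) := by
      rw [Finset.mul_sum]
      rw [← Finset.sum_add_distrib]
      refine Finset.sum_congr rfl fun k hk => ?_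
      rw [Finset.mul_sum, ← Finset.sum_add_distrib]
      refine Finset.sum_congr rfl fun l hl => ?_
      exact hterm k hk l hl
    rw [hsum_eq]
    refine add_nonneg ?_ ?_
    · refine Finset.sum_nonneg fun k _ => Finset.sum_nonneg fun l _ => ?_
      exact div_nonneg (sq_nonneg _) (mul_nonneg (hp_nonneg k) (hp_nonneg l))
    · exact mul_nonneg (by norm_num) (aux_gram_inner_nonneg s u v iuu ivv)
  -- conclude
  have hfactor : (0:ℝ) ≤ 1 / ((K:ℝ) - 1) := by
    have h2 : (2:ℝ) ≤ (K:ℝ) := by exact_mod_cast hK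
    have : (0:ℝ) ≤ (K:ℝ) - 1 := by linarith
    positivity
  simp only [psi]
  exact mul_le_mul_of_nonneg_left main hfactor
end
end
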